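/- arXiv:2205.09718 — 3 statements merged into one kernel-verified Lean document; each statement's English description precedes it below -/
import Mathlib

section
/- Let X be a proper metric space and A ⊆ X nonempty closed such that any two points x,y ∈ X/A with d(x,y) < d(x,A) or with y = A can be joined by a geodesic in X/A. Then the pseudometric space D_∞(X,A) with the bottleneck distance is geodesic. -/
open scoped ENNReal
open Filter Metric Set Topology

/-- The bottleneck (pre)distance between two `ℕ`-indexed representatives of persistence
diagrams on the metric pair `(X, A)`: the infimum, over countable multisets `α`, `β` of points
of `A` adjoined to `f` and `g` respectively and over bijections between the resulting
multisets, of the supremum displacement. -/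
noncomputable def bdist {X : Type*} [MetricSpace X] (A : Set X) (f g : ℕ → X) : ℝ≥0∞ :=
  ⨅ (α : ℕ → X) (_ : ∀ n, α n ∈ A) (β : ℕ → X) (_ : ∀ n, β n ∈ A)
    (e : (ℕ ⊕ ℕ) ≃ (ℕ ⊕ ℕ)), ⨆ n : ℕ ⊕ ℕ, edist (Sum.elim f α n) (Sum.elim g β (e n))

/-- Two representatives define the same persistence diagram on `(X, A)` iff their restrictions
away from `A` agree as multisets, i.e. there is a value-preserving bijection between the index
sets of points outside `A`. -/
def DiagEquiv {X : Type*} [MetricSpace X] (A : Set X) (f g : ℕ → X) : Prop :=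
  ∃ e : {n : ℕ // f n ∉ A} ≃ {n : ℕ // g n ∉ A}, ∀ p, g (e p).1 = f p.1

/-- A representative belongs to `D_∞(X, A)` iff it is at finite bottleneck distance from the
empty diagram (represented by any multiset of points of `A`). -/
def IsDiagram {X : Type*} [MetricSpace X] (A : Set X) (f : ℕ → X) : Prop :=
  ∃ g : ℕ → X, (∀ n, g n ∈ A) ∧ bdist A f g ≠ ⊤

/-- The quotient metric of `X/A`, read on representatives in `X`:
`d_{X/A}(x,y) = min (d(x,y)) (d(x,A) + d(y,A))`. -/
noncomputable def qdist {X : Type*} [MetricSpace X] (A : Set X) (x y : X) : ℝ :=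
  min (dist x y) (Metric.infDist x A + Metric.infDist y A)

section Infra
variable {X : Type*} [MetricSpace X] [ProperSpace X] {A : Set X}

/-- projection to a closed nonempty set in a proper space -/
noncomputable def projA (hA : A.Nonempty) (hAcl : IsClosed A) (x : X) : X :=
  (hAcl.exists_infDist_eq_dist hA x).choose

lemma projA_mem (hA : A.Nonempty) (hAcl : IsClosed A) (x : X) : projA hA hAcl x ∈ A :=
  (hAcl.exists_infDist_eq_dist hA x).choose_spec.1

lemma edist_projA (hA : A.Nonempty) (hAcl : IsClosed A) (x : X) :
    edist x (projA hA hAcl x) = Metric.infEDist x A := by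
  refine le_antisymm ?_ (Metric.infEDist_le_edist_of_mem (projA_mem hA hAcl x))
  rw [Metric.infEDist]
  refine le_iInf₂ fun y hy => ?_
  rw [edist_dist, edist_dist]
  apply ENNReal.ofReal_le_ofReal
  unfold projA
  rw [← (hAcl.exists_infDist_eq_dist hA x).choose_spec.2]
  exact Metric.infDist_le_dist_of_mem hy

/-- Master upper bound for `bdist` from a partial matching in σ/τ form. -/
theorem bdist_le_of_partial (hA : A.Nonempty) (hAcl : IsClosed A) (u v : ℕ → X) (b : ℝ≥0∞)
    (σ τ : ℕ → Option ℕ)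
    (hst : ∀ n m, σ n = some m ↔ τ m = some n)
    (h1 : ∀ n m, σ n = some m → edist (u n) (v m) ≤ b)
    (h2 : ∀ n, σ n = none → Metric.infEDist (u n) A ≤ b)
    (h3 : ∀ m, τ m = none → Metric.infEDist (v m) A ≤ b) :
    bdist A u v ≤ b := by
  classical
  set S : Set ℕ := {n | σ n ≠ none} with hS
  set T : Set ℕ := {m | τ m ≠ none} with hT
  -- the bijection between matched indices
  have hmS : ∀ n : S, ∃ m, σ n.1 = some m := by
    rintro ⟨n, hn⟩; exact Option.ne_none_iff_exists'.mp hn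
  have hmT : ∀ m : T, ∃ n, τ m.1 = some n := by
    rintro ⟨m, hm⟩; exact Option.ne_none_iff_exists'.mp hm
  choose mf hmf using hmS
  choose nf hnf using hmT
  have hmem1 : ∀ n : S, mf n ∈ T := fun n => by
    have := (hst n.1 (mf n)).mp (hmf n); simp [hT, this]
  have hmem2 : ∀ m : T, nf m ∈ S := fun m => by
    have := (hst (nf m) m.1).mpr (hnf m); simp [hS, this]
  set e : S ≃ T := ⟨fun n => ⟨mf n, hmem1 n⟩, fun m => ⟨nf m, hmem2 m⟩,
    fun n => Subtype.ext (Option.some_inj.mp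
      ((hnf ⟨mf n, hmem1 n⟩).symm.trans ((hst n.1 (mf n)).mp (hmf n)))),
    fun m => Subtype.ext (Option.some_inj.mp
      ((hmf ⟨nf m, hmem2 m⟩).symm.trans ((hst (nf m) m.1).mpr (hnf m))))⟩ with he
  have hecost : ∀ n : S, edist (u n.1) (v (e n).1) ≤ b := fun n => h1 _ _ (hmf n)
  -- auxiliary equivs
  have hφ : Nonempty (ℕ ≃ (↥(Sᶜ) ⊕ ℕ)) := nonempty_equiv_of_countable
  have hψ : Nonempty (ℕ ≃ (↥(Tᶜ) ⊕ ℕ)) := nonempty_equiv_of_countable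
  obtain ⟨φ⟩ := hφ
  obtain ⟨ψ⟩ := hψ
  set E' : (↥(Sᶜ) ⊕ ℕ) ≃ (↥(Tᶜ) ⊕ ℕ) :=
    ((Equiv.refl _).sumCongr ψ).trans <|
    ((Equiv.sumAssoc _ _ _).symm).trans <|
    ((Equiv.sumComm _ _).sumCongr (Equiv.refl ℕ)).trans <|
    ((Equiv.sumAssoc _ _ _)).trans <|
    ((Equiv.refl _).sumCongr φ.symm) with hE'
  have hE'l : ∀ s : ↥(Sᶜ), E' (Sum.inl s) = Sum.inr (φ.symm (Sum.inl s)) := by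
    intro s; simp [hE', Equiv.sumAssoc]
  have hE'r : ∀ k : ℕ, E' (Sum.inr k) =
      (ψ k).elim (fun t => Sum.inl t) (fun j => Sum.inr (φ.symm (Sum.inr j))) := by
    intro k; cases hψk : ψ k with
    | inl t => simp [hE', hψk, Equiv.sumAssoc]
    | inr j => simp [hE', hψk, Equiv.sumAssoc]
  set E : (ℕ ⊕ ℕ) ≃ (ℕ ⊕ ℕ) :=
    (((Equiv.Set.sumCompl S).symm).sumCongr (Equiv.refl ℕ)).trans <|
    (Equiv.sumAssoc _ _ _).trans <|
    (e.sumCongr E').trans <|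
    ((Equiv.sumAssoc _ _ _).symm).trans <|
    ((Equiv.Set.sumCompl T).sumCongr (Equiv.refl ℕ)) with hE
  -- the paddings
  set α : ℕ → X := fun k => (ψ k).elim (fun t => projA hA hAcl (v t.1)) (fun _ => hA.some)
    with hα
  set β : ℕ → X := fun k => (φ k).elim (fun s => projA hA hAcl (u s.1)) (fun _ => hA.some)
    with hβ
  have hαA : ∀ k, α k ∈ A := by
    intro k
    simp only [hα]
    rcases hk : ψ k with t | j
    · simp only [hk, Sum.elim_inl]; exact projA_mem hA hAcl _
    · simp only [hk, Sum.elim_inr]; exact hA.some_mem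
  have hβA : ∀ k, β k ∈ A := by
    intro k
    simp only [hβ]
    rcases hk : φ k with s | j
    · simp only [hk, Sum.elim_inl]; exact projA_mem hA hAcl _
    · simp only [hk, Sum.elim_inr]; exact hA.some_mem
  have key : ∀ i : ℕ ⊕ ℕ, edist (Sum.elim u α i) (Sum.elim v β (E i)) ≤ b := by
    intro i
    cases i with
    | inl n =>
      by_cases hn : n ∈ S
      · have hEn : E (Sum.inl n) = Sum.inl ((e ⟨n, hn⟩).1) := by
          simp [hE, Equiv.Set.sumCompl_symm_apply_of_mem hn]
        rw [hEn]
        simp only [Sum.elim_inl]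
        exact hecost ⟨n, hn⟩
      · have hn' : n ∈ Sᶜ := hn
        have hEn : E (Sum.inl n) = Sum.inr (φ.symm (Sum.inl ⟨n, hn'⟩)) := by
          simp [hE, Equiv.Set.sumCompl_symm_apply_of_notMem hn, hE'l]
        rw [hEn]
        have : β (φ.symm (Sum.inl ⟨n, hn'⟩)) = projA hA hAcl (u n) := by
          simp [hβ]
        simp only [Sum.elim_inl, Sum.elim_inr, this]
        rw [edist_projA hA hAcl]
        exact h2 n (by simpa [hS] using hn)
    | inr k =>
      cases hψk : ψ k with
      | inl t =>
        have hEk : E (Sum.inr k) = Sum.inl t.1 := by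
          simp [hE, hE'r, hψk]
        rw [hEk]
        have hak : α k = projA hA hAcl (v t.1) := by simp [hα, hψk]
        simp only [Sum.elim_inl, Sum.elim_inr, hak]
        rw [edist_comm, edist_projA hA hAcl]
        refine h3 t.1 ?_
        have ht := t.2
        simp only [hT, Set.mem_compl_iff, Set.mem_setOf_eq, not_not] at ht
        exact ht
      | inr j =>
        have hEk : E (Sum.inr k) = Sum.inr (φ.symm (Sum.inr j)) := by
          simp [hE, hE'r, hψk]
        rw [hEk]
        have hαk : α k = hA.some := by simp [hα, hψk]
        have hβk : β (φ.symm (Sum.inr j)) = hA.some := by simp [hβ]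
        simp only [Sum.elim_inr, hαk, hβk, edist_self]
        exact zero_le
  calc bdist A u v ≤ ⨆ i : ℕ ⊕ ℕ, edist (Sum.elim u α i) (Sum.elim v β (E i)) := by
        rw [bdist]
        refine iInf_le_of_le α (iInf_le_of_le hαA (iInf_le_of_le β (iInf_le_of_le hβA
          (iInf_le_of_le E le_rfl))))
    _ ≤ b := iSup_le key

/-- Extraction of a near-optimal partial matching. -/
theorem bdist_extract (u v : ℕ → X) (c : ℝ≥0∞) (h : bdist A u v < c) :
    ∃ σ τ : ℕ → Option ℕ,
      (∀ n m, σ n = some m ↔ τ m = some n) ∧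
      (∀ n m, σ n = some m → edist (u n) (v m) < c) ∧
      (∀ n, σ n = none → Metric.infEDist (u n) A < c) ∧
      (∀ m, τ m = none → Metric.infEDist (v m) A < c) := by
  rw [bdist] at h
  rw [iInf_lt_iff] at h; obtain ⟨α, h⟩ := h
  rw [iInf_lt_iff] at h; obtain ⟨hα, h⟩ := h
  rw [iInf_lt_iff] at h; obtain ⟨β, h⟩ := h
  rw [iInf_lt_iff] at h; obtain ⟨hβ, h⟩ := h
  rw [iInf_lt_iff] at h; obtain ⟨e, he⟩ := h
  have hcost : ∀ i, edist (Sum.elim u α i) (Sum.elim v β (e i)) < c :=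
    fun i => lt_of_le_of_lt
      (le_iSup (fun n : ℕ ⊕ ℕ => edist (Sum.elim u α n) (Sum.elim v β (e n))) i) he
  refine ⟨fun n => (e (Sum.inl n)).elim some (fun _ => none),
          fun m => (e.symm (Sum.inl m)).elim some (fun _ => none), ?_, ?_, ?_, ?_⟩
  · intro n m
    constructor
    · intro hnm
      simp only at hnm ⊢
      cases hen : e (Sum.inl n) with
      | inl m' =>
        simp only [hen, Sum.elim_inl, Option.some_inj] at hnm; subst hnm
        have h' : e.symm (Sum.inl m') = Sum.inl n := by rw [← hen, Equiv.symm_apply_apply]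
        simp only [h', Sum.elim_inl]
      | inr j => simp only [hen, Sum.elim_inr] at hnm; exact nomatch hnm
    · intro hmn
      simp only at hmn ⊢
      cases hem : e.symm (Sum.inl m) with
      | inl n' =>
        simp only [hem, Sum.elim_inl, Option.some_inj] at hmn; subst hmn
        have h' : e (Sum.inl n') = Sum.inl m := by rw [← hem, Equiv.apply_symm_apply]
        simp only [h', Sum.elim_inl]
      | inr j => simp only [hem, Sum.elim_inr] at hmn; exact nomatch hmn
  · intro n m hnm
    simp only at hnm
    cases hen : e (Sum.inl n) with
    | inl m' =>
      simp only [hen, Sum.elim_inl, Option.some_inj] at hnm; subst hnm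
      have := hcost (Sum.inl n); rw [hen] at this; simpa using this
    | inr j => simp only [hen, Sum.elim_inr] at hnm; exact nomatch hnm
  · intro n hn
    simp only at hn
    cases hen : e (Sum.inl n) with
    | inl m' => simp only [hen, Sum.elim_inl] at hn; exact nomatch hn
    | inr j =>
      have := hcost (Sum.inl n); rw [hen] at this; simp only [Sum.elim_inl, Sum.elim_inr] at this
      exact lt_of_le_of_lt (Metric.infEDist_le_edist_of_mem (hβ j)) this
  · intro m hm
    simp only at hm
    cases hem : e.symm (Sum.inl m) with
    | inl n' => simp only [hem, Sum.elim_inl] at hm; exact nomatch hm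
    | inr k =>
      have he' : e (Sum.inr k) = Sum.inl m := by rw [← hem, Equiv.apply_symm_apply]
      have := hcost (Sum.inr k); rw [he'] at this; simp only [Sum.elim_inl, Sum.elim_inr] at this
      rw [edist_comm] at this
      exact lt_of_le_of_lt (Metric.infEDist_le_edist_of_mem (hα k)) this

theorem bdist_self (hA : A.Nonempty) (hAcl : IsClosed A) (u : ℕ → X) : bdist A u u = 0 := by
  refine le_antisymm ?_ (zero_le)
  refine bdist_le_of_partial hA hAcl u u 0 (fun n => some n) (fun n => some n) ?_ ?_ ?_ ?_
  · intro n m; constructor <;> (intro h; simp_all)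
  · intro n m h; simp at h; subst h; simp
  · intro n h; simp at h
  · intro n h; simp at h

theorem bdist_symm_le (hA : A.Nonempty) (hAcl : IsClosed A) (u v : ℕ → X) :
    bdist A v u ≤ bdist A u v := by
  by_contra hlt
  push_neg at hlt
  obtain ⟨c, hc1, hc2⟩ := exists_between hlt
  obtain ⟨σ, τ, hst, h1, h2, h3⟩ := bdist_extract u v c hc1
  have := bdist_le_of_partial hA hAcl v u c τ σ
    (fun n m => (hst m n).symm)
    (fun n m h => by rw [edist_comm]; exact le_of_lt (h1 m n ((hst m n).mpr h)))
    (fun n h => le_of_lt (h3 n h))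
    (fun m h => le_of_lt (h2 m h))
  exact absurd this (not_le.mpr hc2)

theorem bdist_symm (hA : A.Nonempty) (hAcl : IsClosed A) (u v : ℕ → X) :
    bdist A u v = bdist A v u :=
  le_antisymm (bdist_symm_le hA hAcl v u) (bdist_symm_le hA hAcl u v)

theorem bdist_triangle (hA : A.Nonempty) (hAcl : IsClosed A) (u v w : ℕ → X) :
    bdist A u w ≤ bdist A u v + bdist A v w := by
  by_cases huv : bdist A u v = ⊤
  · rw [huv]; simp
  by_cases hvw : bdist A v w = ⊤
  · rw [hvw]; simp
  apply ENNReal.le_of_forall_pos_le_add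
  intro ε hε _
  have hε2 : (0:ℝ≥0∞) < (ε:ℝ≥0∞)/2 := by
    simp [ENNReal.div_pos_iff, hε.ne']
  have hc1 : bdist A u v < bdist A u v + (ε:ℝ≥0∞)/2 :=
    ENNReal.lt_add_right huv hε2.ne'
  have hc2 : bdist A v w < bdist A v w + (ε:ℝ≥0∞)/2 :=
    ENNReal.lt_add_right hvw hε2.ne'
  obtain ⟨σ1, τ1, hst1, h11, h21, h31⟩ := bdist_extract u v _ hc1
  obtain ⟨σ2, τ2, hst2, h12, h22, h32⟩ := bdist_extract v w _ hc2
  set b1 := bdist A u v + (ε:ℝ≥0∞)/2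
  set b2 := bdist A v w + (ε:ℝ≥0∞)/2
  have := bdist_le_of_partial hA hAcl u w (b1 + b2)
    (fun n => (σ1 n).bind σ2) (fun m => (τ2 m).bind τ1) ?_ ?_ ?_ ?_
  · refine le_trans this (le_of_eq ?_)
    rw [show b1 + b2 = bdist A u v + bdist A v w + ((ε:ℝ≥0∞)/2 + (ε:ℝ≥0∞)/2) by ring]
    rw [ENNReal.add_halves]
  · intro n k
    constructor
    · intro h
      rw [Option.bind_eq_some_iff] at h
      obtain ⟨m, hm1, hm2⟩ := h
      rw [Option.bind_eq_some_iff]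
      exact ⟨m, (hst2 m k).mp hm2, (hst1 n m).mp hm1⟩
    · intro h
      rw [Option.bind_eq_some_iff] at h
      obtain ⟨m, hm1, hm2⟩ := h
      rw [Option.bind_eq_some_iff]
      exact ⟨m, (hst1 n m).mpr hm2, (hst2 m k).mpr hm1⟩
  · intro n k h
    rw [Option.bind_eq_some_iff] at h
    obtain ⟨m, hm1, hm2⟩ := h
    calc edist (u n) (w k) ≤ edist (u n) (v m) + edist (v m) (w k) := edist_triangle _ _ _
      _ ≤ b1 + b2 := add_le_add (le_of_lt (h11 n m hm1)) (le_of_lt (h12 m k hm2))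
  · intro n h
    change (σ1 n).bind σ2 = none at h
    cases hσ1 : σ1 n with
    | none => exact le_trans (le_of_lt (h21 n hσ1)) le_self_add
    | some m =>
      rw [hσ1] at h; simp only [Option.bind_some] at h
      calc Metric.infEDist (u n) A ≤ edist (u n) (v m) + Metric.infEDist (v m) A :=
            Metric.infEDist_le_edist_add_infEDist
        _ ≤ b1 + b2 := add_le_add (le_of_lt (h11 n m hσ1)) (le_of_lt (h22 m h))
  · intro k h
    change (τ2 k).bind τ1 = none at h
    cases hτ2 : τ2 k with
    | none => exact le_trans (le_of_lt (h32 k hτ2)) le_add_self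
    | some m =>
      rw [hτ2] at h; simp only [Option.bind_some] at h
      calc Metric.infEDist (w k) A ≤ edist (w k) (v m) + Metric.infEDist (v m) A :=
            Metric.infEDist_le_edist_add_infEDist
        _ ≤ b2 + b1 := by
            refine add_le_add ?_ (le_of_lt (h31 m h))
            rw [edist_comm]
            exact le_of_lt (h12 m k ((hst2 m k).mpr hτ2))
        _ = b1 + b2 := add_comm _ _

end Infra
section Chunk2
variable {X : Type*} [MetricSpace X] [ProperSpace X] {A : Set X}

theorem bdist_zero_of_mem (hA : A.Nonempty) (hAcl : IsClosed A) (u v : ℕ → X)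
    (hu : ∀ n, u n ∈ A) (hv : ∀ n, v n ∈ A) : bdist A u v = 0 := by
  refine le_antisymm ?_ (zero_le)
  refine bdist_le_of_partial hA hAcl u v 0 (fun _ => none) (fun _ => none) ?_ ?_ ?_ ?_
  · intro n m; simp
  · intro n m h; simp at h
  · intro n _; simp [Metric.infEDist_zero_of_mem (hu n)]
  · intro m _; simp [Metric.infEDist_zero_of_mem (hv m)]

/-- an injective selection from a family of infinite subsets of ℕ -/
theorem exists_inj_selection (D : ℕ → Set ℕ) (hinf : ∀ p, (D p).Infinite) :
    ∃ F : ℕ → ℕ, Function.Injective F ∧ ∀ p, F p ∈ D p := by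
  classical
  have hpick : ∀ p (s : Finset ℕ), ∃ a, a ∈ D p ∧ a ∉ s := by
    intro p s
    obtain ⟨a, ha, has⟩ := (hinf p).exists_notMem_finset s
    exact ⟨a, ha, has⟩
  choose pick hpick1 hpick2 using hpick
  let G : ℕ → ℕ × Finset ℕ := fun p =>
    Nat.rec (pick 0 ∅, {pick 0 ∅}) (fun p ih => (pick (p+1) ih.2, insert (pick (p+1) ih.2) ih.2)) p
  have hG1 : ∀ p, (G p).1 ∈ D p := by
    intro p
    cases p with
    | zero => exact hpick1 0 ∅
    | succ p => exact hpick1 (p+1) (G p).2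
  have hGmem : ∀ p, (G p).1 ∈ (G p).2 := by
    intro p
    cases p with
    | zero => exact Finset.mem_singleton_self _
    | succ p => exact Finset.mem_insert_self _ _
  have hGsub : ∀ p, (G p).2 ⊆ (G (p+1)).2 := fun p => Finset.subset_insert _ _
  have hGsub' : ∀ p q, p ≤ q → (G p).2 ⊆ (G q).2 := by
    intro p q h
    induction h with
    | refl => exact subset_rfl
    | step h ih => exact fun x hx => hGsub _ (ih hx)
  have hnotmem : ∀ p, (G (p+1)).1 ∉ (G p).2 := fun p => hpick2 (p+1) (G p).2
  refine ⟨fun p => (G p).1, ?_, hG1⟩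
  have key : ∀ p q, p < q → (G p).1 ≠ (G q).1 := by
    intro p q hpq heq
    obtain ⟨q', rfl⟩ : ∃ q', q = q' + 1 := ⟨q - 1, by omega⟩
    have h1 : (G p).1 ∈ (G q').2 := hGsub' p q' (by omega) (hGmem p)
    rw [heq] at h1
    exact hnotmem q' h1
  intro p q heq
  by_contra hne
  rcases Nat.lt_or_ge p q with h | h
  · exact key p q h heq
  · exact key q p (by omega) heq.symm

/-- disjoint trains converging to the targets -/
theorem exists_trains (v : ℕ → X) (P : ℕ → X) (Dset : Set ℕ)
    (hacc : ∀ p ∈ Dset, ∀ ε : ℝ, 0 < ε → {m | dist (v m) (P p) < ε}.Infinite) :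
    ∃ T : ℕ → ℕ → ℕ, (∀ p j p' j', T p j = T p' j' → (p = p' ∧ j = j')) ∧
      ∀ p ∈ Dset, ∀ j : ℕ, dist (v (T p j)) (P p) < 1/(j+1) := by
  classical
  set D : ℕ → Set ℕ := fun c =>
    if (Nat.pairEquiv.symm c).1 ∈ Dset then
      {m | dist (v m) (P (Nat.pairEquiv.symm c).1) < 1/(((Nat.pairEquiv.symm c).2 : ℝ)+1)}
    else Set.univ with hD
  have hinf : ∀ c, (D c).Infinite := by
    intro c
    rw [hD]
    by_cases h : (Nat.pairEquiv.symm c).1 ∈ Dset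
    · simp only [h, if_true]
      exact hacc _ h _ (by positivity)
    · simp only [h, if_false]
      exact Set.infinite_univ
  obtain ⟨F, hFinj, hFmem⟩ := exists_inj_selection D hinf
  refine ⟨fun p j => F (Nat.pairEquiv (p, j)), ?_, ?_⟩
  · intro p j p' j' h
    have h2 := Nat.pairEquiv.injective (hFinj h)
    exact ⟨congrArg Prod.fst h2, congrArg Prod.snd h2⟩
  · intro p hp j
    have h2 := hFmem (Nat.pairEquiv (p, j))
    rw [hD] at h2
    simp only [Equiv.symm_apply_apply, hp, if_true] at h2
    exact h2

variable (U : Ultrafilter ℕ)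

/-- cofinitely many k have k⁻¹ ≤ ε -/
theorem inv_nat_mem_ultra (hU : (↑U : Filter ℕ) ≤ cofinite) {ε : ℝ≥0∞} (hε : ε ≠ 0) :
    {k : ℕ | ((k : ℝ≥0∞))⁻¹ ≤ ε} ∈ U := by
  apply hU
  rw [Nat.cofinite_eq_atTop]
  have h := (ENNReal.tendsto_inv_nat_nhds_zero).eventually_lt_const (pos_iff_ne_zero.mpr hε)
  filter_upwards [h] with k hk using le_of_lt hk

/-- one-sided analysis of a minimizing sequence of matchings along an ultrafilter -/
theorem one_side (hU : (↑U : Filter ℕ) ≤ cofinite) (u v : ℕ → X) (r : ℝ≥0∞)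
    (σs : ℕ → ℕ → Option ℕ)
    (hcostk : ∀ k n m, σs k n = some m → edist (u n) (v m) < r + ((k : ℝ≥0∞))⁻¹)
    (hnonek : ∀ k n, σs k n = none → Metric.infEDist (u n) A < r + ((k : ℝ≥0∞))⁻¹)
    (n : ℕ) :
    ({k | σs k n = none} ∈ U → Metric.infEDist (u n) A ≤ r) ∧
    (∀ m, {k | σs k n = some m} ∈ U → edist (u n) (v m) ≤ r) ∧
    (r ≠ ⊤ → {k | σs k n = none} ∉ U → (∀ m, {k | σs k n = some m} ∉ U) →
      ∃ z : X, edist (u n) z ≤ r ∧ ∀ ε : ℝ, 0 < ε → {m | dist (v m) (z) < ε}.Infinite) := by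
  classical
  refine ⟨?_, ?_, ?_⟩
  · intro h
    apply ENNReal.le_of_forall_pos_le_add
    intro ε hε _
    have hK : {k | σs k n = none} ∩ {k : ℕ | ((k : ℝ≥0∞))⁻¹ ≤ (ε : ℝ≥0∞)} ∈ U :=
      Filter.inter_mem h (inv_nat_mem_ultra U hU (by exact_mod_cast hε.ne'))
    obtain ⟨k, hk1, hk2⟩ := Ultrafilter.nonempty_of_mem hK
    calc Metric.infEDist (u n) A ≤ r + ((k : ℝ≥0∞))⁻¹ := le_of_lt (hnonek k n hk1)
      _ ≤ r + ε := by exact add_le_add_right hk2 r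
  · intro m h
    apply ENNReal.le_of_forall_pos_le_add
    intro ε hε _
    have hK : {k | σs k n = some m} ∩ {k : ℕ | ((k : ℝ≥0∞))⁻¹ ≤ (ε : ℝ≥0∞)} ∈ U :=
      Filter.inter_mem h (inv_nat_mem_ultra U hU (by exact_mod_cast hε.ne'))
    obtain ⟨k, hk1, hk2⟩ := Ultrafilter.nonempty_of_mem hK
    calc edist (u n) (v m) ≤ r + ((k : ℝ≥0∞))⁻¹ := le_of_lt (hcostk k n m hk1)
      _ ≤ r + ε := by exact add_le_add_right hk2 r
  · intro hrtop hne hnm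
    have hsome : {k | σs k n ≠ none} ∈ U :=
      Ultrafilter.compl_mem_iff_notMem.mpr hne
    set tval : ℕ → X := fun k => (σs k n).elim (u n) v with htval
    set R : ℝ := (r + 1).toReal with hR
    have hball : ∀ k, σs k n ≠ none → ((k : ℝ≥0∞))⁻¹ ≤ 1 → tval k ∈ closedBall (u n) R := by
      intro k hk hk1
      obtain ⟨m, hm⟩ := Option.ne_none_iff_exists'.mp hk
      have h1 : edist (u n) (v m) ≤ r + 1 :=
        le_trans (le_of_lt (hcostk k n m hm)) (add_le_add_right hk1 r)
      rw [Metric.mem_closedBall, htval]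
      simp only [hm, Option.elim_some]
      rw [dist_edist]
      refine ENNReal.toReal_mono (by simp [hrtop]) ?_
      rw [edist_comm]
      exact h1
    have hKball : {k | tval k ∈ closedBall (u n) R} ∈ U := by
      apply Filter.mem_of_superset
        (Filter.inter_mem hsome (inv_nat_mem_ultra U hU (one_ne_zero)))
      rintro k ⟨hk1, hk2⟩
      exact hball k hk1 hk2
    have hV : (↑(U.map tval) : Filter X) ≤ Filter.principal (closedBall (u n) R) := by
      rw [le_principal_iff]
      exact Ultrafilter.mem_map.mpr hKball
    obtain ⟨z, hz, hVz⟩ := (isCompact_closedBall (u n) R).ultrafilter_le_nhds (U.map tval) hV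
    have hT : Filter.Tendsto tval (↑U) (𝓝 z) := hVz
    refine ⟨z, ?_, ?_⟩
    · apply ENNReal.le_of_forall_pos_le_add
      intro ε hε _
      have hC : IsClosed {y : X | edist (u n) y ≤ r + ε} :=
        isClosed_le (Continuous.edist continuous_const continuous_id) continuous_const
      refine hC.mem_of_tendsto hT ?_
      have hK : {k | σs k n ≠ none} ∩ {k : ℕ | ((k : ℝ≥0∞))⁻¹ ≤ (ε : ℝ≥0∞)} ∈ U :=
        Filter.inter_mem hsome (inv_nat_mem_ultra U hU (by exact_mod_cast hε.ne'))
      apply Filter.mem_of_superset hK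
      rintro k ⟨hk1, hk2⟩
      obtain ⟨m, hm⟩ := Option.ne_none_iff_exists'.mp hk1
      simp only [Set.mem_setOf_eq, htval, hm, Option.elim_some]
      exact le_trans (le_of_lt (hcostk k n m hm)) (add_le_add_right hk2 r)
    · intro ε hε
      by_contra hfin'
      rw [Set.not_infinite] at hfin'
      have hKb : {k | σs k n ≠ none} ∩ tval ⁻¹' (Metric.ball z ε) ∈ U := by
        refine Filter.inter_mem hsome ?_
        exact hT (Metric.ball_mem_nhds z hε)
      have hsub : {k | σs k n ≠ none} ∩ tval ⁻¹' (Metric.ball z ε) ⊆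
          ⋃ m ∈ {m | dist (v m) (z) < ε}, {k | σs k n = some m} := by
        rintro k ⟨hk1, hk2⟩
        obtain ⟨m, hm⟩ := Option.ne_none_iff_exists'.mp hk1
        have : dist (v m) z < ε := by
          have := hk2
          simp only [Set.mem_preimage, Metric.mem_ball, htval, hm, Option.elim_some] at this
          exact this
        exact Set.mem_biUnion this hm
      have hbu : (⋃ m ∈ {m | dist (v m) (z) < ε}, {k | σs k n = some m}) ∈ U :=
        Filter.mem_of_superset hKb hsub
      rw [Ultrafilter.finite_biUnion_mem_iff hfin'] at hbu
      obtain ⟨m, _, hm⟩ := hbu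
      exact hnm m hm

end Chunk2

section Chunk3
variable {X : Type*} [MetricSpace X] [ProperSpace X] {A : Set X}

theorem limit_matching (hA : A.Nonempty) (hAcl : IsClosed A) (u v : ℕ → X) (r : ℝ≥0∞)
    (hrtop : r ≠ ⊤) (hbd : bdist A u v = r) :
    ∃ (σ τ : ℕ → Option ℕ) (fI gI : Set ℕ) (z w : ℕ → X),
      (∀ n m, σ n = some m ↔ τ m = some n) ∧
      (∀ n m, σ n = some m → edist (u n) (v m) ≤ r) ∧
      (∀ n, σ n = none → n ∉ fI → Metric.infEDist (u n) A ≤ r) ∧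
      (∀ m, τ m = none → m ∉ gI → Metric.infEDist (v m) A ≤ r) ∧
      (∀ n ∈ fI, σ n = none ∧ edist (u n) (z n) ≤ r ∧
        ∀ ε : ℝ, 0 < ε → {m | dist (v m) (z n) < ε}.Infinite) ∧
      (∀ m ∈ gI, τ m = none ∧ edist (w m) (v m) ≤ r ∧
        ∀ ε : ℝ, 0 < ε → {n | dist (u n) (w m) < ε}.Infinite) := by
  classical
  set U := Filter.hyperfilter ℕ with hUdef
  have hU : (↑U : Filter ℕ) ≤ cofinite := Filter.hyperfilter_le_cofinite
  have hext : ∀ k : ℕ, bdist A u v < r + ((k:ℝ≥0∞))⁻¹ := fun k => by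
    rw [hbd]
    exact ENNReal.lt_add_right hrtop (ENNReal.inv_ne_zero.mpr (ENNReal.natCast_ne_top k))
  choose σs τs hstk hcostk hnonek hgnonek using fun k => bdist_extract u v _ (hext k)
  have hos := fun n => one_side U hU u v r σs hcostk hnonek n
  have hcostk' : ∀ k m n, τs k m = some n → edist (v m) (u n) < r + ((k:ℝ≥0∞))⁻¹ := by
    intro k m n h
    rw [edist_comm]
    exact hcostk k n m ((hstk k n m).mpr h)
  have hgs := fun m => one_side U hU v u r τs hcostk' hgnonek m
  have huniq : ∀ n m m', {k | σs k n = some m} ∈ U → {k | σs k n = some m'} ∈ U → m = m' := by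
    intro n m m' h1 h2
    obtain ⟨k, hk1, hk2⟩ := Ultrafilter.nonempty_of_mem (Filter.inter_mem h1 h2)
    rw [Set.mem_setOf_eq] at hk1 hk2
    exact Option.some_inj.mp (hk1.symm.trans hk2)
  have htuniq : ∀ m n n', {k | τs k m = some n} ∈ U → {k | τs k m = some n'} ∈ U → n = n' := by
    intro m n n' h1 h2
    obtain ⟨k, hk1, hk2⟩ := Ultrafilter.nonempty_of_mem (Filter.inter_mem h1 h2)
    rw [Set.mem_setOf_eq] at hk1 hk2
    exact Option.some_inj.mp (hk1.symm.trans hk2)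
  set σ : ℕ → Option ℕ :=
    fun n => if h : ∃ m, {k | σs k n = some m} ∈ U then some h.choose else none with hσ
  set τ : ℕ → Option ℕ :=
    fun m => if h : ∃ n, {k | τs k m = some n} ∈ U then some h.choose else none with hτ
  have hσiff : ∀ n m, σ n = some m ↔ {k | σs k n = some m} ∈ U := by
    intro n m
    simp only [hσ]
    constructor
    · intro h
      by_cases hex : ∃ m', {k | σs k n = some m'} ∈ U
      · rw [dif_pos hex] at h
        have h2 := hex.choose_spec
        rwa [Option.some_inj.mp h] at h2
      · rw [dif_neg hex] at h
        exact nomatch h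
    · intro h
      have hex : ∃ m', {k | σs k n = some m'} ∈ U := ⟨m, h⟩
      rw [dif_pos hex]
      exact congrArg some (huniq n _ m hex.choose_spec h)
  have hτiff : ∀ m n, τ m = some n ↔ {k | τs k m = some n} ∈ U := by
    intro m n
    simp only [hτ]
    constructor
    · intro h
      by_cases hex : ∃ n', {k | τs k m = some n'} ∈ U
      · rw [dif_pos hex] at h
        have h2 := hex.choose_spec
        rwa [Option.some_inj.mp h] at h2
      · rw [dif_neg hex] at h
        exact nomatch h
    · intro h
      have hex : ∃ n', {k | τs k m = some n'} ∈ U := ⟨n, h⟩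
      rw [dif_pos hex]
      exact congrArg some (htuniq m _ n hex.choose_spec h)
  have hsetEq : ∀ n m, {k | σs k n = some m} = {k | τs k m = some n} := by
    intro n m
    ext k
    exact hstk k n m
  have hc1 : ∀ n m, σ n = some m ↔ τ m = some n := by
    intro n m
    rw [hσiff, hτiff, hsetEq]
  have hσnone : ∀ n, σ n = none ↔ ∀ m, {k | σs k n = some m} ∉ U := by
    intro n
    simp only [hσ]
    constructor
    · intro h m hm
      rw [dif_pos ⟨m, hm⟩] at h
      exact nomatch h
    · intro h
      rw [dif_neg]
      push_neg
      exact h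
  have hτnone : ∀ m, τ m = none ↔ ∀ n, {k | τs k m = some n} ∉ U := by
    intro m
    simp only [hτ]
    constructor
    · intro h n hn
      rw [dif_pos ⟨n, hn⟩] at h
      exact nomatch h
    · intro h
      rw [dif_neg]
      push_neg
      exact h
  set fI : Set ℕ := {n | σ n = none ∧ {k | σs k n = none} ∉ U} with hfI
  set gI : Set ℕ := {m | τ m = none ∧ {k | τs k m = none} ∉ U} with hgI
  have hzex : ∀ n, ∃ zz : X, n ∈ fI →
      edist (u n) zz ≤ r ∧ ∀ ε : ℝ, 0 < ε → {m | dist (v m) zz < ε}.Infinite := by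
    intro n
    by_cases hn : n ∈ fI
    · obtain ⟨hn1, hn2⟩ := hn
      obtain ⟨zz, hzz⟩ := (hos n).2.2 hrtop hn2 ((hσnone n).mp hn1)
      exact ⟨zz, fun _ => hzz⟩
    · exact ⟨u n, fun h => absurd h hn⟩
  have hwex : ∀ m, ∃ ww : X, m ∈ gI →
      edist (v m) ww ≤ r ∧ ∀ ε : ℝ, 0 < ε → {n | dist (u n) ww < ε}.Infinite := by
    intro m
    by_cases hm : m ∈ gI
    · obtain ⟨hm1, hm2⟩ := hm
      obtain ⟨ww, hww⟩ := (hgs m).2.2 hrtop hm2 ((hτnone m).mp hm1)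
      exact ⟨ww, fun _ => hww⟩
    · exact ⟨v m, fun h => absurd h hm⟩
  choose z hz using hzex
  choose w hw using hwex
  refine ⟨σ, τ, fI, gI, z, w, hc1, ?_, ?_, ?_, ?_, ?_⟩
  · intro n m h
    exact (hos n).2.1 m ((hσiff n m).mp h)
  · intro n hn hnI
    have h2 : {k | σs k n = none} ∈ U := by
      by_contra h3
      exact hnI ⟨hn, h3⟩
    exact (hos n).1 h2
  · intro m hm hmI
    have h2 : {k | τs k m = none} ∈ U := by
      by_contra h3
      exact hmI ⟨hm, h3⟩
    exact (hgs m).1 h2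
  · intro n hn
    exact ⟨hn.1, (hz n hn).1, (hz n hn).2⟩
  · intro m hm
    refine ⟨hm.1, ?_, (hw m hm).2⟩
    rw [edist_comm]
    exact (hw m hm).1

end Chunk3

section Chunk4
variable {X : Type*} [MetricSpace X] [ProperSpace X] {A : Set X}

lemma qdist_nonneg (A : Set X) (x y : X) : 0 ≤ qdist A x y :=
  le_min dist_nonneg (add_nonneg Metric.infDist_nonneg Metric.infDist_nonneg)

lemma qdist_comm (A : Set X) (x y : X) : qdist A x y = qdist A y x := by
  rw [qdist, qdist, dist_comm, add_comm]

lemma infEdist_ofReal (hA : A.Nonempty) (x : X) :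
    Metric.infEDist x A = ENNReal.ofReal (Metric.infDist x A) := by
  rw [Metric.infDist, ENNReal.ofReal_toReal (Metric.infEDist_ne_top hA)]

lemma minsum_eq (hA : A.Nonempty) (a b : X) :
    min (edist a b) (Metric.infEDist a A + Metric.infEDist b A)
      = ENNReal.ofReal (qdist A a b) := by
  have hmono : Monotone ENNReal.ofReal := fun _ _ h => ENNReal.ofReal_le_ofReal h
  rw [qdist, hmono.map_min, edist_dist, infEdist_ofReal hA, infEdist_ofReal hA,
    ← ENNReal.ofReal_add Metric.infDist_nonneg Metric.infDist_nonneg]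

lemma ofReal_qdist_le_edist (a b : X) : ENNReal.ofReal (qdist A a b) ≤ edist a b := by
  rw [edist_dist]
  exact ENNReal.ofReal_le_ofReal (min_le_left _ _)

lemma infE_le_add_qdist (hA : A.Nonempty) (a b : X) :
    Metric.infEDist b A ≤ Metric.infEDist a A + ENNReal.ofReal (qdist A a b) := by
  rcases le_total (dist a b) (Metric.infDist a A + Metric.infDist b A) with h | h
  · rw [qdist, min_eq_left h, ← edist_dist]
    calc Metric.infEDist b A ≤ edist b a + Metric.infEDist a A :=
          Metric.infEDist_le_edist_add_infEDist
      _ = Metric.infEDist a A + edist a b := by rw [edist_comm, add_comm]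
  · rw [qdist, min_eq_right h, ENNReal.ofReal_add Metric.infDist_nonneg Metric.infDist_nonneg,
      ← infEdist_ofReal hA, ← infEdist_ofReal hA]
    calc Metric.infEDist b A ≤ Metric.infEDist a A +
          (Metric.infEDist a A + Metric.infEDist b A) := by
            rw [← add_assoc]; exact le_add_self
      _ = _ := rfl

lemma minsum_cov (hA : A.Nonempty) (g xx b : X) (hend : g = xx ∨ (g ∈ A ∧ xx ∈ A)) :
    min (edist xx b) (Metric.infEDist xx A + Metric.infEDist b A)
      ≤ ENNReal.ofReal (qdist A g b) := by
  rcases hend with rfl | ⟨hgA, hxA⟩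
  · exact le_of_eq (minsum_eq hA _ _)
  · refine le_trans (min_le_right _ _) ?_
    rw [Metric.infEDist_zero_of_mem hxA, zero_add]
    calc Metric.infEDist b A ≤ Metric.infEDist g A + ENNReal.ofReal (qdist A g b) :=
          infE_le_add_qdist hA g b
      _ = ENNReal.ofReal (qdist A g b) := by rw [Metric.infEDist_zero_of_mem hgA, zero_add]

lemma minsum_cov' (hA : A.Nonempty) (g yy b : X) (hend : g = yy ∨ (g ∈ A ∧ yy ∈ A)) :
    min (edist b yy) (Metric.infEDist b A + Metric.infEDist yy A)
      ≤ ENNReal.ofReal (qdist A b g) := by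
  rw [edist_comm, add_comm, qdist_comm]
  exact minsum_cov hA g yy b hend

lemma qdist_proj (hA : A.Nonempty) (hAcl : IsClosed A) (x : X) :
    qdist A x (projA hA hAcl x) = Metric.infDist x A := by
  have h1 : dist x (projA hA hAcl x) = Metric.infDist x A :=
    ((hAcl.exists_infDist_eq_dist hA x).choose_spec.2).symm
  have h2 : Metric.infDist (projA hA hAcl x) A = 0 :=
    Metric.infDist_zero_of_mem (projA_mem hA hAcl x)
  rw [qdist, h1, h2, add_zero, min_self]

end Chunk4

section Chunk5
variable {X : Type*} [MetricSpace X] [ProperSpace X] {A : Set X}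

theorem pair_paths (hA : A.Nonempty) (hAcl : IsClosed A)
    (hgeo : ∀ x y : X, (qdist A x y < Metric.infDist x A ∨ y ∈ A) →
      ∃ γ : ℝ → X, (γ 0 = x ∨ (γ 0 ∈ A ∧ x ∈ A)) ∧ (γ 1 = y ∨ (γ 1 ∈ A ∧ y ∈ A)) ∧
        ∀ s t : ℝ, s ∈ Set.Icc (0:ℝ) 1 → t ∈ Set.Icc (0:ℝ) 1 →
          qdist A (γ s) (γ t) = |s - t| * qdist A x y)
    (x y : X) (c : ℝ≥0∞) (hxy : edist x y ≤ c) :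
    ∃ p q : ℝ → X,
      (∀ s t : ℝ, s ∈ Set.Icc (0:ℝ) 1 → t ∈ Set.Icc (0:ℝ) 1 →
        min (edist (p s) (p t)) (Metric.infEDist (p s) A + Metric.infEDist (p t) A)
          ≤ ENNReal.ofReal |s - t| * c ∧
        min (edist (q s) (q t)) (Metric.infEDist (q s) A + Metric.infEDist (q t) A)
          ≤ ENNReal.ofReal |s - t| * c) ∧
      (∀ t : ℝ, t ∈ Set.Icc (0:ℝ) 1 →
        min (edist x (p t)) (Metric.infEDist x A + Metric.infEDist (p t) A)
          ≤ ENNReal.ofReal t * c ∧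
        Metric.infEDist (q t) A ≤ ENNReal.ofReal t * c) ∧
      ((∀ t : ℝ, t ∈ Set.Icc (0:ℝ) 1 →
        min (edist (p t) y) (Metric.infEDist (p t) A + Metric.infEDist y A)
          ≤ ENNReal.ofReal (1 - t) * c ∧
        Metric.infEDist (q t) A ≤ ENNReal.ofReal (1 - t) * c) ∨
       (∀ t : ℝ, t ∈ Set.Icc (0:ℝ) 1 →
        min (edist (q t) y) (Metric.infEDist (q t) A + Metric.infEDist y A)
          ≤ ENNReal.ofReal (1 - t) * c ∧
        Metric.infEDist (p t) A ≤ ENNReal.ofReal (1 - t) * c)) := by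
  classical
  have hqc : ENNReal.ofReal (qdist A x y) ≤ c := le_trans (ofReal_qdist_le_edist x y) hxy
  have hscale : ∀ (a β : ℝ), 0 ≤ a → 0 ≤ β → ENNReal.ofReal β ≤ c →
      ENNReal.ofReal (a * β) ≤ ENNReal.ofReal a * c := by
    intro a β ha hβ hc'
    rw [ENNReal.ofReal_mul ha]
    exact mul_le_mul_right hc' _
  have hjunk : ∀ t : ℝ, Metric.infEDist (hA.some) A = 0 :=
    fun _ => Metric.infEDist_zero_of_mem hA.some_mem
  by_cases hd : qdist A x y < Metric.infDist x A
  · -- direct mode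
    obtain ⟨γ, hγ0, hγ1, hγq⟩ := hgeo x y (Or.inl hd)
    refine ⟨γ, fun _ => hA.some, ?_, ?_, Or.inl ?_⟩
    · intro s t hs ht
      constructor
      · rw [minsum_eq hA, hγq s t hs ht]
        exact hscale _ _ (abs_nonneg _) (qdist_nonneg A x y) hqc
      · refine le_trans (min_le_right _ _) ?_
        rw [hjunk 0, add_zero]
        exact zero_le
    · intro t ht
      constructor
      · refine le_trans (minsum_cov hA (γ 0) x (γ t) hγ0) ?_
        rw [hγq 0 t (Set.left_mem_Icc.mpr zero_le_one) ht]
        rw [show |0 - t| = t by rw [abs_of_nonpos (by linarith [ht.1])]; ring]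
        exact hscale _ _ ht.1 (qdist_nonneg A x y) hqc
      · rw [hjunk 0]; exact zero_le
    · intro t ht
      constructor
      · refine le_trans (minsum_cov' hA (γ 1) y (γ t) hγ1) ?_
        rw [hγq t 1 ht (Set.right_mem_Icc.mpr zero_le_one)]
        rw [show |t - 1| = 1 - t by rw [abs_of_nonpos (by linarith [ht.2])]; ring]
        exact hscale _ _ (by linarith [ht.2]) (qdist_nonneg A x y) hqc
      · rw [hjunk 0]; exact zero_le
  by_cases hdr : qdist A y x < Metric.infDist y A
  · -- reversed direct mode
    obtain ⟨γ, hγ0, hγ1, hγq⟩ := hgeo y x (Or.inl hdr)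
    have hqc' : ENNReal.ofReal (qdist A y x) ≤ c := by rwa [qdist_comm]
    have hmem : ∀ t : ℝ, t ∈ Set.Icc (0:ℝ) 1 → 1 - t ∈ Set.Icc (0:ℝ) 1 := by
      intro t ht; exact ⟨by linarith [ht.2], by linarith [ht.1]⟩
    refine ⟨fun t => γ (1 - t), fun _ => hA.some, ?_, ?_, Or.inl ?_⟩
    · intro s t hs ht
      constructor
      · rw [minsum_eq hA, hγq (1-s) (1-t) (hmem s hs) (hmem t ht)]
        rw [show |1 - s - (1 - t)| = |s - t| by rw [abs_sub_comm]; ring_nf]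
        exact hscale _ _ (abs_nonneg _) (qdist_nonneg A y x) hqc'
      · refine le_trans (min_le_right _ _) ?_
        rw [hjunk 0, add_zero]
        exact zero_le
    · intro t ht
      constructor
      · refine le_trans (minsum_cov hA (γ 1) x (γ (1-t)) hγ1) ?_
        rw [hγq 1 (1-t) (Set.right_mem_Icc.mpr zero_le_one) (hmem t ht)]
        rw [show |1 - (1 - t)| = t by rw [abs_of_nonneg (by linarith [ht.1])]; ring]
        exact hscale _ _ ht.1 (qdist_nonneg A y x) hqc'
      · rw [hjunk 0]; exact zero_le
    · intro t ht
      constructor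
      · refine le_trans (minsum_cov' hA (γ 0) y (γ (1-t)) hγ0) ?_
        rw [hγq (1-t) 0 (hmem t ht) (Set.left_mem_Icc.mpr zero_le_one)]
        rw [show |1 - t - 0| = 1 - t by rw [abs_of_nonneg (by linarith [ht.2])]; ring]
        exact hscale _ _ (by linarith [ht.2]) (qdist_nonneg A y x) hqc'
      · rw [hjunk 0]; exact zero_le
  · -- split mode
    push_neg at hd hdr
    have hix : ENNReal.ofReal (Metric.infDist x A) ≤ c :=
      le_trans (ENNReal.ofReal_le_ofReal hd) hqc
    have hiy : ENNReal.ofReal (Metric.infDist y A) ≤ c := by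
      refine le_trans (ENNReal.ofReal_le_ofReal hdr) ?_
      rw [qdist_comm]; exact hqc
    obtain ⟨γx, hγx0, hγx1, hγxq⟩ := hgeo x (projA hA hAcl x) (Or.inr (projA_mem hA hAcl x))
    obtain ⟨γy, hγy0, hγy1, hγyq⟩ := hgeo y (projA hA hAcl y) (Or.inr (projA_mem hA hAcl y))
    have hqx := qdist_proj hA hAcl x
    have hqy := qdist_proj hA hAcl y
    have hγx1A : γx 1 ∈ A := by
      rcases hγx1 with h | h
      · rw [h]; exact projA_mem hA hAcl x
      · exact h.1
    have hγy1A : γy 1 ∈ A := by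
      rcases hγy1 with h | h
      · rw [h]; exact projA_mem hA hAcl y
      · exact h.1
    have hmem : ∀ t : ℝ, t ∈ Set.Icc (0:ℝ) 1 → 1 - t ∈ Set.Icc (0:ℝ) 1 := by
      intro t ht; exact ⟨by linarith [ht.2], by linarith [ht.1]⟩
    have hinfgp : ∀ t : ℝ, t ∈ Set.Icc (0:ℝ) 1 →
        Metric.infEDist (γx t) A ≤ ENNReal.ofReal (1 - t) * c := by
      intro t ht
      calc Metric.infEDist (γx t) A
          ≤ Metric.infEDist (γx 1) A + ENNReal.ofReal (qdist A (γx 1) (γx t)) :=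
            infE_le_add_qdist hA _ _
        _ = ENNReal.ofReal (qdist A (γx 1) (γx t)) := by
            rw [Metric.infEDist_zero_of_mem hγx1A, zero_add]
        _ ≤ ENNReal.ofReal (1 - t) * c := by
            rw [hγxq 1 t (Set.right_mem_Icc.mpr zero_le_one) ht, hqx]
            rw [show |1 - t| = 1 - t by rw [abs_of_nonneg (by linarith [ht.2])]]
            exact hscale _ _ (by linarith [ht.2]) Metric.infDist_nonneg hix
    have hinfgq : ∀ t : ℝ, t ∈ Set.Icc (0:ℝ) 1 →
        Metric.infEDist (γy (1 - t)) A ≤ ENNReal.ofReal t * c := by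
      intro t ht
      calc Metric.infEDist (γy (1 - t)) A
          ≤ Metric.infEDist (γy 1) A + ENNReal.ofReal (qdist A (γy 1) (γy (1 - t))) :=
            infE_le_add_qdist hA _ _
        _ = ENNReal.ofReal (qdist A (γy 1) (γy (1 - t))) := by
            rw [Metric.infEDist_zero_of_mem hγy1A, zero_add]
        _ ≤ ENNReal.ofReal t * c := by
            rw [hγyq 1 (1-t) (Set.right_mem_Icc.mpr zero_le_one) (hmem t ht), hqy]
            rw [show |1 - (1 - t)| = t by rw [abs_of_nonneg (by linarith [ht.1])]; ring]
            exact hscale _ _ ht.1 Metric.infDist_nonneg hiy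
    refine ⟨γx, fun t => γy (1 - t), ?_, ?_, Or.inr ?_⟩
    · intro s t hs ht
      constructor
      · rw [minsum_eq hA, hγxq s t hs ht, hqx]
        exact hscale _ _ (abs_nonneg _) Metric.infDist_nonneg hix
      · rw [minsum_eq hA, hγyq (1-s) (1-t) (hmem s hs) (hmem t ht), hqy]
        rw [show |1 - s - (1 - t)| = |s - t| by rw [abs_sub_comm]; ring_nf]
        exact hscale _ _ (abs_nonneg _) Metric.infDist_nonneg hiy
    · intro t ht
      constructor
      · refine le_trans (minsum_cov hA (γx 0) x (γx t) hγx0) ?_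
        rw [hγxq 0 t (Set.left_mem_Icc.mpr zero_le_one) ht, hqx]
        rw [show |0 - t| = t by rw [abs_of_nonpos (by linarith [ht.1])]; ring]
        exact hscale _ _ ht.1 Metric.infDist_nonneg hix
      · exact hinfgq t ht
    · intro t ht
      constructor
      · refine le_trans (minsum_cov' hA (γy 0) y (γy (1-t)) hγy0) ?_
        rw [hγyq (1-t) 0 (hmem t ht) (Set.left_mem_Icc.mpr zero_le_one), hqy]
        rw [show |1 - t - 0| = 1 - t by rw [abs_of_nonneg (by linarith [ht.2])]; ring]
        exact hscale _ _ (by linarith [ht.2]) Metric.infDist_nonneg hiy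
      · exact hinfgp t ht

end Chunk5

section Chunk6
variable {X : Type*} [MetricSpace X] [ProperSpace X] {A : Set X}

/-- simple diagonal matching bound -/
theorem diag_bound (hA : A.Nonempty) (hAcl : IsClosed A) (L V : ℕ → X) (B : ℝ≥0∞)
    (hmin : ∀ j, min (edist (L j) (V j))
      (Metric.infEDist (L j) A + Metric.infEDist (V j) A) ≤ B) :
    bdist A L V ≤ B := by
  classical
  refine bdist_le_of_partial hA hAcl L V B
    (fun j => if edist (L j) (V j) ≤ B then some j else none)
    (fun j => if edist (L j) (V j) ≤ B then some j else none) ?_ ?_ ?_ ?_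
  · intro n m
    constructor
    · intro h
      by_cases hc : edist (L n) (V n) ≤ B
      · rw [if_pos hc] at h
        obtain rfl := Option.some_inj.mp h
        rw [if_pos hc]
      · rw [if_neg hc] at h; exact nomatch h
    · intro h
      by_cases hc : edist (L m) (V m) ≤ B
      · rw [if_pos hc] at h
        obtain rfl := Option.some_inj.mp h
        rw [if_pos hc]
      · rw [if_neg hc] at h; exact nomatch h
  · intro n m h
    by_cases hc : edist (L n) (V n) ≤ B
    · rw [if_pos hc] at h
      obtain rfl := Option.some_inj.mp h
      exact hc
    · rw [if_neg hc] at h; exact nomatch h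
  · intro n h
    by_cases hc : edist (L n) (V n) ≤ B
    · rw [if_pos hc] at h; exact nomatch h
    · rcases min_le_iff.mp (hmin n) with h' | h'
      · exact absurd h' hc
      · exact le_trans le_self_add h'
  · intro m h
    by_cases hc : edist (L m) (V m) ≤ B
    · rw [if_pos hc] at h; exact nomatch h
    · rcases min_le_iff.mp (hmin m) with h' | h'
      · exact absurd h' hc
      · exact le_trans le_add_self h'

/-- The cascade (train-shift) matching bound. -/
theorem cascade_bound (hA : A.Nonempty) (hAcl : IsClosed A) (L V : ℕ → X) (B : ℝ≥0∞) (J : ℕ)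
    (own : ℕ → ℕ) (howninj : Function.Injective own)
    (ζ : ℕ → X) (DL : Set ℕ) (dem : ℕ → ℕ)
    (hdeminj : ∀ d ∈ DL, ∀ d' ∈ DL, dem d = dem d' → d = d')
    (hdemne : ∀ d ∈ DL, ∀ n, dem d ≠ own n)
    (T : ℕ → ℕ → ℕ)
    (hTinj : ∀ p j p' j', T p j = T p' j' → (p = p' ∧ j = j'))
    (hTdist : ∀ d ∈ DL, ∀ j : ℕ, dist (L (T d j)) (ζ d) < 1/(j+1))
    (hmin : ∀ n, min (edist (L n) (V (own n)))
      (Metric.infEDist (L n) A + Metric.infEDist (V (own n)) A) ≤ B)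
    (hdemmin : ∀ d ∈ DL, min (edist (ζ d) (V (dem d)))
      (Metric.infEDist (ζ d) A + Metric.infEDist (V (dem d)) A) ≤ B)
    (hrest : ∀ j, (∀ n, j ≠ own n) → (∀ d ∈ DL, j ≠ dem d) → Metric.infEDist (V j) A ≤ B) :
    bdist A L V ≤ B + ENNReal.ofReal (3 * (1/(J+1))) := by
  classical
  set B' : ℝ≥0∞ := B + ENNReal.ofReal (3 * (1/(J+1))) with hB'
  have hBB' : B ≤ B' := le_add_right le_rfl
  -- basic facts
  have hfrac : ∀ j : ℕ, J ≤ j → (1/((j:ℝ)+1)) ≤ 1/((J:ℝ)+1) := by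
    intro j hj
    apply one_div_le_one_div_of_le
    · positivity
    · exact_mod_cast by omega
  have hTedist : ∀ d ∈ DL, ∀ j : ℕ, J ≤ j →
      edist (L (T d j)) (ζ d) ≤ ENNReal.ofReal (1/((J:ℝ)+1)) := by
    intro d hd j hj
    rw [edist_dist]
    exact ENNReal.ofReal_le_ofReal (le_trans (le_of_lt (hTdist d hd j)) (hfrac j hj))
  -- link predicates
  set trig : ℕ → Prop := fun d => edist (ζ d) (V (dem d)) ≤ B with htrig
  set lnk : ℕ → Prop := fun n => edist (L n) (V (own n)) ≤ B with hlnk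
  have hnotlnk : ∀ n, ¬ lnk n →
      Metric.infEDist (L n) A ≤ B ∧ Metric.infEDist (V (own n)) A ≤ B := by
    intro n h
    rcases min_le_iff.mp (hmin n) with h' | h'
    · exact absurd h' h
    · exact ⟨le_trans le_self_add h', le_trans le_add_self h'⟩
  have hnottrig : ∀ d ∈ DL, ¬ trig d → Metric.infEDist (V (dem d)) A ≤ B := by
    intro d hd h
    rcases min_le_iff.mp (hdemmin d hd) with h' | h'
    · exact absurd h' h
    · exact le_trans le_add_self h'
  -- inverse functions
  set tInv : ℕ → Option (ℕ × ℕ) := fun n =>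
    if h : ∃ p : ℕ × ℕ, T p.1 p.2 = n then some h.choose else none with htInv
  have htInvT : ∀ d j, tInv (T d j) = some (d, j) := by
    intro d j
    have hex : ∃ p : ℕ × ℕ, T p.1 p.2 = T d j := ⟨(d, j), rfl⟩
    simp only [htInv, dif_pos hex]
    congr 1
    have h2 := hex.choose_spec
    have h3 := hTinj _ _ _ _ h2
    exact Prod.ext h3.1 h3.2
  have htInvSome : ∀ n p, tInv n = some p → T p.1 p.2 = n := by
    intro n p h
    simp only [htInv] at h
    by_cases hex : ∃ p : ℕ × ℕ, T p.1 p.2 = n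
    · rw [dif_pos hex] at h
      obtain rfl := Option.some_inj.mp h
      exact hex.choose_spec
    · rw [dif_neg hex] at h; exact nomatch h
  set demInv : ℕ → Option ℕ := fun j' =>
    if h : ∃ d, d ∈ DL ∧ dem d = j' then some h.choose else none with hdemInv
  have hdemInvT : ∀ d ∈ DL, demInv (dem d) = some d := by
    intro d hd
    have hex : ∃ d', d' ∈ DL ∧ dem d' = dem d := ⟨d, hd, rfl⟩
    simp only [hdemInv, dif_pos hex]
    exact congrArg some (hdeminj _ hex.choose_spec.1 _ hd hex.choose_spec.2)
  have hdemInvSome : ∀ j' d, demInv j' = some d → d ∈ DL ∧ dem d = j' := by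
    intro j' d h
    simp only [hdemInv] at h
    by_cases hex : ∃ d', d' ∈ DL ∧ dem d' = j'
    · rw [dif_pos hex] at h
      obtain rfl := Option.some_inj.mp h
      exact hex.choose_spec
    · rw [dif_neg hex] at h; exact nomatch h
  have hdemInvOwn : ∀ n, demInv (own n) = none := by
    intro n
    simp only [hdemInv]
    rw [dif_neg]
    rintro ⟨d, hd, h⟩
    exact hdemne d hd n h
  set ownInv : ℕ → Option ℕ := fun j' =>
    if h : ∃ n, own n = j' then some h.choose else none with hownInv
  have hownInvT : ∀ n, ownInv (own n) = some n := by
    intro n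
    have hex : ∃ n', own n' = own n := ⟨n, rfl⟩
    simp only [hownInv, dif_pos hex]
    exact congrArg some (howninj hex.choose_spec)
  have hownInvSome : ∀ j' n, ownInv j' = some n → own n = j' := by
    intro j' n h
    simp only [hownInv] at h
    by_cases hex : ∃ n', own n' = j'
    · rw [dif_pos hex] at h
      obtain rfl := Option.some_inj.mp h
      exact hex.choose_spec
    · rw [dif_neg hex] at h; exact nomatch h
  -- the matching
  set act : ℕ × ℕ → Prop := fun p => p.1 ∈ DL ∧ J ≤ p.2 ∧ trig p.1 with hact
  set σc : ℕ → Option ℕ := fun n =>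
    match tInv n with
    | some p =>
      if act p then
        (if p.2 = J then some (dem p.1)
         else if lnk (T p.1 (p.2 - 1)) then some (own (T p.1 (p.2 - 1))) else none)
      else (if lnk n then some (own n) else none)
    | none => if lnk n then some (own n) else none
    with hσc
  set τc : ℕ → Option ℕ := fun j' =>
    match demInv j' with
    | some d => if trig d then some (T d J) else none
    | none =>
      match ownInv j' with
      | some n =>
        (match tInv n with
         | some p =>
           if act p then (if lnk n then some (T p.1 (p.2 + 1)) else none)
           else (if lnk n then some n else none)
         | none => if lnk n then some n else none)
      | none => none
    with hτc
  refine le_trans (bdist_le_of_partial hA hAcl L V B' σc τc ?_ ?_ ?_ ?_) le_rfl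
  · -- consistency
    intro n j'
    constructor
    · intro h
      simp only [hσc] at h
      rcases htn : tInv n with _ | p
      · rw [htn] at h
        simp only at h
        by_cases hl : lnk n
        · rw [if_pos hl] at h
          obtain rfl := Option.some_inj.mp h
          simp only [hτc, hdemInvOwn n, hownInvT n, htn]
          rw [if_pos hl]
        · rw [if_neg hl] at h; exact nomatch h
      · rw [htn] at h
        simp only at h
        by_cases ha : act p
        · rw [if_pos ha] at h
          obtain ⟨hpD, hpJ, hpt⟩ := ha
          by_cases hJ : p.2 = J
          · rw [if_pos hJ] at h
            obtain rfl := Option.some_inj.mp h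
            simp only [hτc, hdemInvT p.1 hpD]
            rw [if_pos hpt]
            congr 1
            rw [← htInvSome n p htn, hJ]
          · rw [if_neg hJ] at h
            by_cases hl : lnk (T p.1 (p.2 - 1))
            · rw [if_pos hl] at h
              obtain rfl := Option.some_inj.mp h
              simp only [hτc, hdemInvOwn, hownInvT, htInvT p.1 (p.2 - 1)]
              have hact2 : act (p.1, p.2 - 1) := ⟨hpD, by omega, hpt⟩
              rw [if_pos hact2, if_pos hl]
              congr 1
              rw [show p.2 - 1 + 1 = p.2 by omega]
              exact htInvSome n p htn
            · rw [if_neg hl] at h; exact nomatch h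
        · rw [if_neg ha] at h
          by_cases hl : lnk n
          · rw [if_pos hl] at h
            obtain rfl := Option.some_inj.mp h
            simp only [hτc, hdemInvOwn n, hownInvT n, htn]
            rw [if_neg ha, if_pos hl]
          · rw [if_neg hl] at h; exact nomatch h
    · intro h
      simp only [hτc] at h
      rcases hdj : demInv j' with _ | d
      · rw [hdj] at h
        simp only at h
        rcases hoj : ownInv j' with _ | n₀
        · rw [hoj] at h; exact nomatch h
        · rw [hoj] at h
          simp only at h
          have hj'own : own n₀ = j' := hownInvSome j' n₀ hoj
          rcases htn0 : tInv n₀ with _ | p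
          · rw [htn0] at h
            simp only at h
            by_cases hl : lnk n₀
            · rw [if_pos hl] at h
              obtain rfl := Option.some_inj.mp h
              simp only [hσc, htn0]
              rw [if_pos hl, hj'own]
            · rw [if_neg hl] at h; exact nomatch h
          · rw [htn0] at h
            simp only at h
            by_cases ha : act p
            · rw [if_pos ha] at h
              by_cases hl : lnk n₀
              · rw [if_pos hl] at h
                obtain rfl := Option.some_inj.mp h
                simp only [hσc, htInvT p.1 (p.2 + 1)]
                have hact2 : act (p.1, p.2 + 1) := ⟨ha.1, by omega, ha.2.2⟩
                rw [if_pos hact2]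
                rw [if_neg (by omega : ¬ p.2 + 1 = J)]
                rw [show p.2 + 1 - 1 = p.2 by omega]
                rw [htInvSome n₀ p htn0, if_pos hl, hj'own]
              · rw [if_neg hl] at h; exact nomatch h
            · rw [if_neg ha] at h
              by_cases hl : lnk n₀
              · rw [if_pos hl] at h
                obtain rfl := Option.some_inj.mp h
                simp only [hσc, htn0]
                rw [if_neg ha, if_pos hl, hj'own]
              · rw [if_neg hl] at h; exact nomatch h
      · rw [hdj] at h
        simp only at h
        obtain ⟨hdD, hdemj⟩ := hdemInvSome j' d hdj
        by_cases ht : trig d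
        · rw [if_pos ht] at h
          obtain rfl := Option.some_inj.mp h
          simp only [hσc, htInvT d J]
          have hact2 : act (d, J) := ⟨hdD, le_rfl, ht⟩
          rw [if_pos hact2]
          simp only [if_true]
          rw [hdemj]
        · rw [if_neg ht] at h; exact nomatch h
  · -- matched cost bounds
    intro n j' h
    simp only [hσc] at h
    rcases htn : tInv n with _ | p
    · rw [htn] at h
      simp only at h
      by_cases hl : lnk n
      · rw [if_pos hl] at h
        obtain rfl := Option.some_inj.mp h
        exact le_trans hl hBB'
      · rw [if_neg hl] at h; exact nomatch h
    · rw [htn] at h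
      simp only at h
      have hTn := htInvSome n p htn
      by_cases ha : act p
      · obtain ⟨hpD, hpJ, hpt⟩ := ha
        rw [if_pos ⟨hpD, hpJ, hpt⟩] at h
        by_cases hJ : p.2 = J
        · rw [if_pos hJ] at h
          obtain rfl := Option.some_inj.mp h
          calc edist (L n) (V (dem p.1))
              ≤ edist (L n) (ζ p.1) + edist (ζ p.1) (V (dem p.1)) := edist_triangle _ _ _
            _ ≤ ENNReal.ofReal (1/((J:ℝ)+1)) + B := by
                refine add_le_add ?_ hpt
                rw [← hTn]
                exact hTedist p.1 hpD p.2 hpJ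
            _ ≤ B' := by
                rw [hB', add_comm]
                refine add_le_add_right ?_ B
                apply ENNReal.ofReal_le_ofReal
                rw [show (3:ℝ) * (1/(J+1)) = 1/(J+1) + (1/(J+1) + 1/(J+1)) by ring]
                have : (0:ℝ) < 1/((J:ℝ)+1) := by positivity
                linarith
        · rw [if_neg hJ] at h
          by_cases hl : lnk (T p.1 (p.2 - 1))
          · rw [if_pos hl] at h
            obtain rfl := Option.some_inj.mp h
            have hJlt : J < p.2 := by omega
            calc edist (L n) (V (own (T p.1 (p.2 - 1))))
                ≤ edist (L n) (ζ p.1) + edist (ζ p.1) (L (T p.1 (p.2 - 1)))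
                  + edist (L (T p.1 (p.2 - 1))) (V (own (T p.1 (p.2 - 1)))) := by
                  calc edist (L n) (V (own (T p.1 (p.2 - 1))))
                      ≤ edist (L n) (L (T p.1 (p.2 - 1)))
                        + edist (L (T p.1 (p.2 - 1))) (V (own (T p.1 (p.2 - 1)))) :=
                        edist_triangle _ _ _
                    _ ≤ (edist (L n) (ζ p.1) + edist (ζ p.1) (L (T p.1 (p.2 - 1))))
                        + edist (L (T p.1 (p.2 - 1))) (V (own (T p.1 (p.2 - 1)))) := by
                        exact add_le_add_left (edist_triangle _ _ _) _
              _ ≤ ENNReal.ofReal (1/((J:ℝ)+1)) + ENNReal.ofReal (1/((J:ℝ)+1)) + B := by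
                  refine add_le_add (add_le_add ?_ ?_) hl
                  · rw [← hTn]
                    exact hTedist p.1 hpD p.2 hpJ
                  · rw [edist_comm]
                    exact hTedist p.1 hpD (p.2 - 1) (by omega)
              _ ≤ B' := by
                  rw [hB', add_comm]
                  refine add_le_add_right ?_ B
                  rw [← ENNReal.ofReal_add (by positivity) (by positivity)]
                  apply ENNReal.ofReal_le_ofReal
                  rw [show (3:ℝ) * (1/(J+1)) = (1/(J+1) + 1/(J+1)) + 1/(J+1) by ring]
                  have : (0:ℝ) < 1/((J:ℝ)+1) := by positivity
                  linarith
          · rw [if_neg hl] at h; exact nomatch h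
      · rw [if_neg ha] at h
        by_cases hl : lnk n
        · rw [if_pos hl] at h
          obtain rfl := Option.some_inj.mp h
          exact le_trans hl hBB'
        · rw [if_neg hl] at h; exact nomatch h
  · -- unmatched left
    intro n h
    simp only [hσc] at h
    rcases htn : tInv n with _ | p
    · rw [htn] at h
      simp only at h
      by_cases hl : lnk n
      · rw [if_pos hl] at h; exact nomatch h
      · exact le_trans (hnotlnk n hl).1 hBB'
    · rw [htn] at h
      simp only at h
      have hTn := htInvSome n p htn
      by_cases ha : act p
      · obtain ⟨hpD, hpJ, hpt⟩ := ha
        rw [if_pos ⟨hpD, hpJ, hpt⟩] at h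
        by_cases hJ : p.2 = J
        · rw [if_pos hJ] at h; exact nomatch h
        · rw [if_neg hJ] at h
          by_cases hl : lnk (T p.1 (p.2 - 1))
          · rw [if_pos hl] at h; exact nomatch h
          · calc Metric.infEDist (L n) A
                ≤ edist (L n) (L (T p.1 (p.2 - 1))) + Metric.infEDist (L (T p.1 (p.2 - 1))) A :=
                  Metric.infEDist_le_edist_add_infEDist
              _ ≤ (edist (L n) (ζ p.1) + edist (ζ p.1) (L (T p.1 (p.2 - 1)))) + B := by
                  refine add_le_add (edist_triangle _ _ _) (hnotlnk _ hl).1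
              _ ≤ (ENNReal.ofReal (1/((J:ℝ)+1)) + ENNReal.ofReal (1/((J:ℝ)+1))) + B := by
                  refine add_le_add (add_le_add ?_ ?_) le_rfl
                  · rw [← hTn]
                    exact hTedist p.1 hpD p.2 hpJ
                  · rw [edist_comm]
                    exact hTedist p.1 hpD (p.2 - 1) (by omega)
              _ ≤ B' := by
                  rw [hB', add_comm]
                  refine add_le_add_right ?_ B
                  rw [← ENNReal.ofReal_add (by positivity) (by positivity)]
                  apply ENNReal.ofReal_le_ofReal
                  rw [show (3:ℝ) * (1/(J+1)) = 1/(J+1) + 1/(J+1) + 1/(J+1) by ring]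
                  have : (0:ℝ) < 1/((J:ℝ)+1) := by positivity
                  linarith
      · rw [if_neg ha] at h
        by_cases hl : lnk n
        · rw [if_pos hl] at h; exact nomatch h
        · exact le_trans (hnotlnk n hl).1 hBB'
  · -- unmatched right
    intro j' h
    simp only [hτc] at h
    rcases hdj : demInv j' with _ | d
    · rw [hdj] at h
      simp only at h
      rcases hoj : ownInv j' with _ | n₀
      · rw [hoj] at h
        -- j' is neither a demand slot nor owned
        refine le_trans (hrest j' ?_ ?_) hBB'
        · intro n hn
          have := hownInvT n
          rw [← hn, hoj] at this
          exact nomatch this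
        · intro d hd hdm
          have := hdemInvT d hd
          rw [← hdm, hdj] at this
          exact nomatch this
      · rw [hoj] at h
        simp only at h
        have hj'own : own n₀ = j' := hownInvSome j' n₀ hoj
        rcases htn0 : tInv n₀ with _ | p
        · rw [htn0] at h
          simp only at h
          by_cases hl : lnk n₀
          · rw [if_pos hl] at h; exact nomatch h
          · rw [← hj'own]
            exact le_trans (hnotlnk n₀ hl).2 hBB'
        · rw [htn0] at h
          simp only at h
          by_cases ha : act p
          · rw [if_pos ha] at h
            by_cases hl : lnk n₀
            · rw [if_pos hl] at h; exact nomatch h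
            · rw [← hj'own]
              exact le_trans (hnotlnk n₀ hl).2 hBB'
          · rw [if_neg ha] at h
            by_cases hl : lnk n₀
            · rw [if_pos hl] at h; exact nomatch h
            · rw [← hj'own]
              exact le_trans (hnotlnk n₀ hl).2 hBB'
    · rw [hdj] at h
      simp only at h
      obtain ⟨hdD, hdemj⟩ := hdemInvSome j' d hdj
      by_cases ht : trig d
      · rw [if_pos ht] at h; exact nomatch h
      · rw [← hdemj]
        exact le_trans (hnottrig d hdD ht) hBB'

end Chunk6

section Chunk7
variable {X : Type*} [MetricSpace X] [ProperSpace X] {A : Set X}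

theorem le_of_all_J {a b : ℝ≥0∞} (h : ∀ J : ℕ, a ≤ b + ENNReal.ofReal (3 * (1/(J+1)))) :
    a ≤ b := by
  apply ENNReal.le_of_forall_pos_le_add
  intro ε hε _
  obtain ⟨J, hJ⟩ := exists_nat_gt (3 / (ε:ℝ))
  refine le_trans (h J) (add_le_add_right ?_ b)
  rw [← ENNReal.ofReal_coe_nnreal]
  apply ENNReal.ofReal_le_ofReal
  have hε' : (0:ℝ) < ε := hε
  rw [div_lt_iff₀ hε'] at hJ
  have hJ1 : (0:ℝ) < (J:ℝ) + 1 := by positivity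
  rw [mul_one_div, div_le_iff₀ hJ1]
  nlinarith

theorem infE_snd_of_minsum {x b : X} {B : ℝ≥0∞}
    (h : min (edist x b) (Metric.infEDist x A + Metric.infEDist b A) ≤ B) (hx : x ∈ A) :
    Metric.infEDist b A ≤ B := by
  rcases min_le_iff.mp h with h' | h'
  · calc Metric.infEDist b A ≤ edist b x + Metric.infEDist x A :=
        Metric.infEDist_le_edist_add_infEDist
      _ = edist x b := by rw [Metric.infEDist_zero_of_mem hx, add_zero, edist_comm]
      _ ≤ B := h'
  · exact le_trans le_add_self h'

theorem infE_fst_of_minsum {a y : X} {B : ℝ≥0∞}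
    (h : min (edist a y) (Metric.infEDist a A + Metric.infEDist y A) ≤ B) (hy : y ∈ A) :
    Metric.infEDist a A ≤ B := by
  rcases min_le_iff.mp h with h' | h'
  · calc Metric.infEDist a A ≤ edist a y + Metric.infEDist y A :=
        Metric.infEDist_le_edist_add_infEDist
      _ = edist a y := by rw [Metric.infEDist_zero_of_mem hy, add_zero]
      _ ≤ B := h'
  · exact le_trans le_self_add h'

end Chunk7


/-- Suppose `X` is proper and any two points `x, y` of `X/A` with `d(x,y) < d(x,A)` or
`y = A` can be joined by a geodesic in `X/A`.  Then `D_∞(X, A)` is geodesic: any two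
diagrams are joined by a constant-speed geodesic for the bottleneck distance. -/
theorem stmt_15 {X : Type*} [MetricSpace X] [ProperSpace X] (A : Set X)
    (hA : A.Nonempty) (hAcl : IsClosed A)
    (hgeo : ∀ x y : X, (qdist A x y < Metric.infDist x A ∨ y ∈ A) →
      ∃ γ : ℝ → X, (γ 0 = x ∨ (γ 0 ∈ A ∧ x ∈ A)) ∧ (γ 1 = y ∨ (γ 1 ∈ A ∧ y ∈ A)) ∧
        ∀ s t : ℝ, s ∈ Set.Icc (0:ℝ) 1 → t ∈ Set.Icc (0:ℝ) 1 →
          qdist A (γ s) (γ t) = |s - t| * qdist A x y) :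
    ∀ f g : ℕ → X, IsDiagram A f → IsDiagram A g →
      ∃ Γ : ℝ → ℕ → X, DiagEquiv A (Γ 0) f ∧ DiagEquiv A (Γ 1) g ∧
        (∀ t ∈ Set.Icc (0:ℝ) 1, IsDiagram A (Γ t)) ∧
        ∀ s t : ℝ, s ∈ Set.Icc (0:ℝ) 1 → t ∈ Set.Icc (0:ℝ) 1 →
          bdist A (Γ s) (Γ t) = ENNReal.ofReal |s - t| * bdist A f g := by
  classical
  intro f g hf hg
  obtain ⟨f₀, hf₀A, hff₀⟩ := hf
  obtain ⟨g₀, hg₀A, hgg₀⟩ := hg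
  set r : ℝ≥0∞ := bdist A f g with hr
  have hrtop : r ≠ ⊤ := by
    have h1 : bdist A f g ≤ bdist A f f₀ + (bdist A f₀ g₀ + bdist A g₀ g) :=
      le_trans (bdist_triangle hA hAcl f f₀ g)
        (add_le_add_right (bdist_triangle hA hAcl f₀ g₀ g) _)
    rw [bdist_zero_of_mem hA hAcl f₀ g₀ hf₀A hg₀A, zero_add, bdist_symm hA hAcl g₀ g] at h1
    have h2 : bdist A f f₀ + bdist A g g₀ < ⊤ :=
      lt_top_iff_ne_top.mpr (ENNReal.add_ne_top.mpr ⟨hff₀, hgg₀⟩)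
    exact (lt_of_le_of_lt h1 h2).ne
  obtain ⟨σ, τ, fI, gI, z, w, hc1, hc2, hc3, hc5, hc4, hc6⟩ :=
    limit_matching hA hAcl f g r hrtop hr.symm
  obtain ⟨Tg, hTginj, hTgdist⟩ := exists_trains g z fI (fun n hn => (hc4 n hn).2.2)
  obtain ⟨Tf, hTfinj, hTfdist⟩ := exists_trains f w gI (fun m hm => (hc6 m hm).2.2)
  set pairX : ℕ ⊕ ℕ → X := Sum.elim f (fun m =>
    if τ m = none then (if m ∈ gI then w m else projA hA hAcl (g m)) else hA.some) with hpairX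
  set pairY : ℕ ⊕ ℕ → X := Sum.elim (fun n =>
    (σ n).elim (if n ∈ fI then z n else projA hA hAcl (f n)) g)
    (fun m => if τ m = none then g m else hA.some) with hpairY
  have hxy : ∀ i, edist (pairX i) (pairY i) ≤ r := by
    intro i
    rcases i with n | m
    · simp only [hpairX, hpairY, Sum.elim_inl]
      rcases hσn : σ n with _ | m
      · simp only [Option.elim_none]
        by_cases hn : n ∈ fI
        · rw [if_pos hn]
          exact (hc4 n hn).2.1
        · rw [if_neg hn, edist_projA hA hAcl]
          exact hc3 n hσn hn
      · simp only [Option.elim_some]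
        exact hc2 n m hσn
    · simp only [hpairX, hpairY, Sum.elim_inr]
      by_cases hτm : τ m = none
      · rw [if_pos hτm, if_pos hτm]
        by_cases hm : m ∈ gI
        · rw [if_pos hm]
          exact (hc6 m hm).2.1
        · rw [if_neg hm, edist_comm, edist_projA hA hAcl]
          exact hc5 m hτm hm
      · rw [if_neg hτm, if_neg hτm, edist_self]
        exact zero_le
  choose P Q hI1 hI2 hI3 using fun i => pair_paths hA hAcl hgeo (pairX i) (pairY i) r (hxy i)
  obtain ⟨nat2⟩ : Nonempty (ℕ ≃ ((ℕ ⊕ ℕ) ⊕ (ℕ ⊕ ℕ))) := nonempty_equiv_of_countable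
  set slot : ((ℕ ⊕ ℕ) ⊕ (ℕ ⊕ ℕ)) → ℝ → X :=
    fun s t => Sum.elim (fun i => P i t) (fun i => Q i t) s with hslot
  set Γ : ℝ → ℕ → X :=
    fun t j => if t ≤ 0 then f j else if 1 ≤ t then g j else slot (nat2 j) t with hΓdef
  have hΓ0 : Γ 0 = f := funext fun j => if_pos le_rfl
  have hΓ1 : Γ 1 = g := funext fun j => by
    simp only [hΓdef]
    rw [if_neg (by norm_num), if_pos le_rfl]
  have hΓt : ∀ t : ℝ, 0 < t → t < 1 → ∀ j, Γ t j = slot (nat2 j) t := by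
    intro t h1 h2 j
    simp only [hΓdef]
    rw [if_neg (not_le.mpr h1), if_neg (not_le.mpr h2)]
  -- cover machinery for the g-side
  set Lp : (ℕ ⊕ ℕ) → Prop := fun i => ∀ t : ℝ, t ∈ Set.Icc (0:ℝ) 1 →
    min (edist (P i t) (pairY i)) (Metric.infEDist (P i t) A + Metric.infEDist (pairY i) A)
      ≤ ENNReal.ofReal (1 - t) * r ∧
    Metric.infEDist (Q i t) A ≤ ENNReal.ofReal (1 - t) * r with hLp
  set cover : (ℕ ⊕ ℕ) → ((ℕ ⊕ ℕ) ⊕ (ℕ ⊕ ℕ)) :=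
    fun i => if Lp i then Sum.inl i else Sum.inr i with hcover
  set anticov : (ℕ ⊕ ℕ) → ((ℕ ⊕ ℕ) ⊕ (ℕ ⊕ ℕ)) :=
    fun i => if Lp i then Sum.inr i else Sum.inl i with hanticov
  have hcov1 : ∀ i, ∀ t : ℝ, t ∈ Set.Icc (0:ℝ) 1 →
      min (edist (slot (cover i) t) (pairY i))
        (Metric.infEDist (slot (cover i) t) A + Metric.infEDist (pairY i) A)
        ≤ ENNReal.ofReal (1 - t) * r := by
    intro i t ht
    by_cases h : Lp i
    · simp only [hcover, if_pos h, hslot, Sum.elim_inl]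
      exact (h t ht).1
    · simp only [hcover, if_neg h, hslot, Sum.elim_inr]
      exact ((hI3 i).resolve_left h t ht).1
  have hcov2 : ∀ i, ∀ t : ℝ, t ∈ Set.Icc (0:ℝ) 1 →
      Metric.infEDist (slot (anticov i) t) A ≤ ENNReal.ofReal (1 - t) * r := by
    intro i t ht
    by_cases h : Lp i
    · simp only [hanticov, if_pos h, hslot, Sum.elim_inr]
      exact (h t ht).2
    · simp only [hanticov, if_neg h, hslot, Sum.elim_inl]
      exact ((hI3 i).resolve_left h t ht).2
  have hcovinj : Function.Injective cover := by
    intro i i' h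
    simp only [hcover] at h
    by_cases h1 : Lp i <;> by_cases h2 : Lp i'
    · rw [if_pos h1, if_pos h2] at h; exact Sum.inl_injective h
    · rw [if_pos h1, if_neg h2] at h; exact absurd h (by simp)
    · rw [if_neg h1, if_pos h2] at h; exact absurd h (by simp)
    · rw [if_neg h1, if_neg h2] at h; exact Sum.inr_injective h
  have hcovcases : ∀ s' : ((ℕ ⊕ ℕ) ⊕ (ℕ ⊕ ℕ)), ∃ i, s' = cover i ∨ s' = anticov i := by
    intro s'
    rcases s' with i | i
    · refine ⟨i, ?_⟩
      by_cases h : Lp i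
      · left; simp only [hcover]; rw [if_pos h]
      · right; simp only [hanticov]; rw [if_neg h]
    · refine ⟨i, ?_⟩
      by_cases h : Lp i
      · right; simp only [hanticov]; rw [if_pos h]
      · left; simp only [hcover]; rw [if_neg h]
  set owner : ℕ → (ℕ ⊕ ℕ) := fun m => (τ m).elim (Sum.inr m) Sum.inl with howner
  have hownerY : ∀ m, pairY (owner m) = g m := by
    intro m
    rcases hτm : τ m with _ | n
    · simp only [howner, hτm, Option.elim_none, hpairY, Sum.elim_inr, if_pos]
    · simp only [howner, hτm, Option.elim_some, hpairY, Sum.elim_inl]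
      rw [(hc1 n m).mpr hτm]
      rfl
  have hownerinj : Function.Injective owner := by
    intro m m' h
    simp only [howner] at h
    rcases hm : τ m with _ | n <;> rcases hm' : τ m' with _ | n' <;> rw [hm, hm'] at h <;>
      simp only [Option.elim_none, Option.elim_some] at h
    · exact Sum.inr_injective h
    · exact absurd h (by simp)
    · exact absurd h (by simp)
    · have h2 := Sum.inl_injective h
      subst h2
      have e1 := (hc1 n m).mpr hm
      have e2 := (hc1 n m').mpr hm'
      exact Option.some_inj.mp (e1.symm.trans e2)
  -- upper bounds
  have const01 : (0:ℝ) ∈ Set.Icc (0:ℝ) 1 := Set.left_mem_Icc.mpr zero_le_one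
  have const11 : (1:ℝ) ∈ Set.Icc (0:ℝ) 1 := Set.right_mem_Icc.mpr zero_le_one
  have HMF : ∀ t : ℝ, 0 < t → t < 1 → t ∈ Set.Icc (0:ℝ) 1 →
      bdist A f (Γ t) ≤ ENNReal.ofReal t * r := by
    intro t ht0 ht1 htI
    apply le_of_all_J
    intro J
    refine cascade_bound hA hAcl f (Γ t) (ENNReal.ofReal t * r) J
      (fun n => nat2.symm (Sum.inl (Sum.inl n))) ?_ w gI
      (fun m => nat2.symm (Sum.inl (Sum.inr m))) ?_ ?_ Tf hTfinj hTfdist ?_ ?_ ?_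
    · intro n n' h
      have h2 := nat2.symm.injective h
      exact Sum.inl_injective (Sum.inl_injective h2)
    · intro d _ d' _ h
      have h2 := nat2.symm.injective h
      exact Sum.inr_injective (Sum.inl_injective h2)
    · intro d _ n h
      have h2 := Sum.inl_injective (nat2.symm.injective h)
      exact nomatch h2
    · -- hmin
      intro n
      have hv : Γ t (nat2.symm (Sum.inl (Sum.inl n))) = P (Sum.inl n) t := by
        rw [hΓt t ht0 ht1, Equiv.apply_symm_apply]
        simp only [hslot, Sum.elim_inl]
      rw [hv]
      have h2 := (hI2 (Sum.inl n) t htI).1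
      simpa only [hpairX, Sum.elim_inl] using h2
    · -- hdemmin
      intro d hd
      have hv : Γ t (nat2.symm (Sum.inl (Sum.inr d))) = P (Sum.inr d) t := by
        rw [hΓt t ht0 ht1, Equiv.apply_symm_apply]
        simp only [hslot, Sum.elim_inl]
      rw [hv]
      have h2 := (hI2 (Sum.inr d) t htI).1
      have hx : pairX (Sum.inr d) = w d := by
        simp only [hpairX, Sum.elim_inr]
        rw [if_pos (hc6 d hd).1, if_pos hd]
      rw [hx] at h2
      exact h2
    · -- hrest
      intro j' hno hnd
      rcases hs' : nat2 j' with (n | m) | i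
      · exfalso
        refine hno n ?_
        rw [← hs', Equiv.symm_apply_apply]
      · have hm : m ∉ gI := by
          intro hm
          refine hnd m hm ?_
          rw [← hs', Equiv.symm_apply_apply]
        have hv : Γ t j' = P (Sum.inr m) t := by
          rw [hΓt t ht0 ht1, hs']
          simp only [hslot, Sum.elim_inl]
        rw [hv]
        have hXA : pairX (Sum.inr m) ∈ A := by
          simp only [hpairX, Sum.elim_inr]
          by_cases hτm : τ m = none
          · rw [if_pos hτm, if_neg hm]
            exact projA_mem hA hAcl (g m)
          · rw [if_neg hτm]
            exact hA.some_mem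
        exact infE_snd_of_minsum (hI2 (Sum.inr m) t htI).1 hXA
      · have hv : Γ t j' = Q i t := by
          rw [hΓt t ht0 ht1, hs']
          simp only [hslot, Sum.elim_inr]
        rw [hv]
        exact (hI2 i t htI).2
  have HMG : ∀ s : ℝ, 0 < s → s < 1 → s ∈ Set.Icc (0:ℝ) 1 →
      bdist A g (Γ s) ≤ ENNReal.ofReal (1 - s) * r := by
    intro s hs0 hs1 hsI
    apply le_of_all_J
    intro J
    refine cascade_bound hA hAcl g (Γ s) (ENNReal.ofReal (1 - s) * r) J
      (fun m => nat2.symm (cover (owner m))) ?_ z fI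
      (fun d => nat2.symm (cover (Sum.inl d))) ?_ ?_ Tg hTginj hTgdist ?_ ?_ ?_
    · intro m m' h
      exact hownerinj (hcovinj (nat2.symm.injective h))
    · intro d _ d' _ h
      exact Sum.inl_injective (hcovinj (nat2.symm.injective h))
    · -- hdemne
      intro d hd m h
      have h2 : Sum.inl d = owner m := hcovinj (nat2.symm.injective h)
      rcases hτm : τ m with _ | n
      · simp only [howner, hτm, Option.elim_none] at h2
        exact nomatch h2
      · simp only [howner, hτm, Option.elim_some] at h2
        have hdn : d = n := Sum.inl_injective h2
        subst hdn
        have e1 : σ d = some m := (hc1 d m).mpr hτm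
        rw [(hc4 d hd).1] at e1
        exact nomatch e1
    · -- hmin
      intro m
      have hv : Γ s (nat2.symm (cover (owner m))) = slot (cover (owner m)) s := by
        rw [hΓt s hs0 hs1, Equiv.apply_symm_apply]
      rw [hv]
      have h2 := hcov1 (owner m) s hsI
      rw [hownerY m] at h2
      rw [edist_comm (g m), add_comm (Metric.infEDist (g m) A)]
      exact h2
    · -- hdemmin
      intro d hd
      have hv : Γ s (nat2.symm (cover (Sum.inl d))) = slot (cover (Sum.inl d)) s := by
        rw [hΓt s hs0 hs1, Equiv.apply_symm_apply]
      rw [hv]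
      have h2 := hcov1 (Sum.inl d) s hsI
      have hY : pairY (Sum.inl d) = z d := by
        simp only [hpairY, Sum.elim_inl, (hc4 d hd).1, Option.elim_none]
        rw [if_pos hd]
      rw [hY] at h2
      rw [edist_comm (z d), add_comm (Metric.infEDist (z d) A)]
      exact h2
    · -- hrest
      intro j' hno hnd
      obtain ⟨i, hcase⟩ := hcovcases (nat2 j')
      rcases hcase with hci | hai
      · have hv : Γ s j' = slot (cover i) s := by
          rw [hΓt s hs0 hs1, ← hci]
        rw [hv]
        have hYA : pairY i ∈ A := by
          rcases i with n | m
          · rcases hσn : σ n with _ | m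
            · by_cases hn : n ∈ fI
              · exfalso
                refine hnd n hn ?_
                rw [← hci, Equiv.symm_apply_apply]
              · simp only [hpairY, Sum.elim_inl, hσn, Option.elim_none]
                rw [if_neg hn]
                exact projA_mem hA hAcl (f n)
            · exfalso
              refine hno m ?_
              have ho : owner m = Sum.inl n := by
                simp only [howner, (hc1 n m).mp hσn, Option.elim_some]
              rw [ho, ← hci, Equiv.symm_apply_apply]
          · by_cases hτm : τ m = none
            · exfalso
              refine hno m ?_
              have ho : owner m = Sum.inr m := by
                simp only [howner, hτm, Option.elim_none]
              rw [ho, ← hci, Equiv.symm_apply_apply]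
            · simp only [hpairY, Sum.elim_inr]
              rw [if_neg hτm]
              exact hA.some_mem
        exact infE_fst_of_minsum (hcov1 i s hsI) hYA
      · have hv : Γ s j' = slot (anticov i) s := by
          rw [hΓt s hs0 hs1, ← hai]
        rw [hv]
        exact hcov2 i s hsI
  have HUB : ∀ s t : ℝ, s ∈ Set.Icc (0:ℝ) 1 → t ∈ Set.Icc (0:ℝ) 1 → s ≤ t →
      bdist A (Γ s) (Γ t) ≤ ENNReal.ofReal (t - s) * r := by
    intro s t hsI htI hst
    by_cases hs0 : s ≤ 0
    · have hs' : s = 0 := le_antisymm hs0 hsI.1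
      subst hs'
      by_cases ht0 : t ≤ 0
      · have ht' : t = 0 := le_antisymm ht0 htI.1
        subst ht'
        rw [bdist_self hA hAcl]
        exact zero_le
      by_cases ht1 : 1 ≤ t
      · have ht' : t = 1 := le_antisymm htI.2 ht1
        subst ht'
        rw [hΓ0, hΓ1]
        rw [show (1:ℝ) - 0 = 1 by ring, ENNReal.ofReal_one, one_mul]
      · push_neg at ht0 ht1
        rw [hΓ0, show t - 0 = t by ring]
        exact HMF t ht0 ht1 htI
    · push_neg at hs0
      by_cases ht1 : 1 ≤ t
      · have ht' : t = 1 := le_antisymm htI.2 ht1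
        subst ht'
        by_cases hs1 : 1 ≤ s
        · have hs' : s = 1 := le_antisymm hsI.2 hs1
          subst hs'
          rw [bdist_self hA hAcl]
          exact zero_le
        · push_neg at hs1
          rw [hΓ1, bdist_symm hA hAcl]
          exact HMG s hs0 hs1 hsI
      · push_neg at ht1
        have hs1 : s < 1 := lt_of_le_of_lt hst ht1
        have ht0 : 0 < t := lt_of_lt_of_le hs0 hst
        refine diag_bound hA hAcl (Γ s) (Γ t) _ ?_
        intro j
        rw [hΓt s hs0 hs1 j, hΓt t ht0 ht1 j]
        have habs : |s - t| = t - s := by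
          rw [abs_of_nonpos (by linarith)]; ring
        rcases hsj : nat2 j with i | i
        · have h2 := (hI1 i s t hsI htI).1
          rw [habs] at h2
          simpa only [hslot, Sum.elim_inl] using h2
        · have h2 := (hI1 i s t hsI htI).2
          rw [habs] at h2
          simpa only [hslot, Sum.elim_inr] using h2
  have h01 : bdist A (Γ 0) (Γ 1) = r := by rw [hΓ0, hΓ1]
  have HEQ : ∀ s t : ℝ, s ∈ Set.Icc (0:ℝ) 1 → t ∈ Set.Icc (0:ℝ) 1 → s ≤ t →
      bdist A (Γ s) (Γ t) = ENNReal.ofReal (t - s) * r := by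
    intro s t hsI htI hst
    refine le_antisymm (HUB s t hsI htI hst) ?_
    by_contra hlt
    push_neg at hlt
    have hB1top : ENNReal.ofReal s * r ≠ ⊤ := ENNReal.mul_ne_top ENNReal.ofReal_ne_top hrtop
    have hB3top : ENNReal.ofReal (1 - t) * r ≠ ⊤ :=
      ENNReal.mul_ne_top ENNReal.ofReal_ne_top hrtop
    have h1 : r ≤ bdist A (Γ 0) (Γ s) + bdist A (Γ s) (Γ t) + bdist A (Γ t) (Γ 1) := by
      rw [← h01]
      calc bdist A (Γ 0) (Γ 1) ≤ bdist A (Γ 0) (Γ t) + bdist A (Γ t) (Γ 1) :=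
            bdist_triangle hA hAcl _ _ _
        _ ≤ (bdist A (Γ 0) (Γ s) + bdist A (Γ s) (Γ t)) + bdist A (Γ t) (Γ 1) :=
            add_le_add_left (bdist_triangle hA hAcl _ _ _) _
    have h2 : bdist A (Γ 0) (Γ s) ≤ ENNReal.ofReal s * r := by
      have h' := HUB 0 s const01 hsI hsI.1
      rwa [sub_zero] at h'
    have h3 : bdist A (Γ t) (Γ 1) ≤ ENNReal.ofReal (1 - t) * r := HUB t 1 htI const11 htI.2
    have h4 : r < ENNReal.ofReal s * r + ENNReal.ofReal (t - s) * r
        + ENNReal.ofReal (1 - t) * r := by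
      calc r ≤ _ := h1
        _ ≤ ENNReal.ofReal s * r + bdist A (Γ s) (Γ t) + ENNReal.ofReal (1 - t) * r :=
            add_le_add (add_le_add h2 le_rfl) h3
        _ < _ := by
            refine ENNReal.add_lt_add_right hB3top ?_
            exact ENNReal.add_lt_add_left hB1top hlt
    have h5 : ENNReal.ofReal s * r + ENNReal.ofReal (t - s) * r
        + ENNReal.ofReal (1 - t) * r = r := by
      rw [← add_mul, ← add_mul, ← ENNReal.ofReal_add hsI.1 (by linarith [hst]),
        ← ENNReal.ofReal_add (by linarith [hsI.1, hst]) (by linarith [htI.2])]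
      rw [show s + (t - s) + (1 - t) = 1 by ring, ENNReal.ofReal_one, one_mul]
    rw [h5] at h4
    exact lt_irrefl r h4
  refine ⟨Γ, ?_, ?_, ?_, ?_⟩
  · rw [hΓ0]; exact ⟨Equiv.refl _, fun p => rfl⟩
  · rw [hΓ1]; exact ⟨Equiv.refl _, fun p => rfl⟩
  · intro t htI
    refine ⟨f₀, hf₀A, ?_⟩
    have h2 : bdist A (Γ t) f₀ ≤ bdist A (Γ t) f + bdist A f f₀ :=
      bdist_triangle hA hAcl _ _ _
    have h3 : bdist A (Γ t) f ≠ ⊤ := by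
      rw [bdist_symm hA hAcl, ← hΓ0, HEQ 0 t const01 htI htI.1]
      exact ENNReal.mul_ne_top ENNReal.ofReal_ne_top hrtop
    exact ne_top_of_le_ne_top (ENNReal.add_ne_top.mpr ⟨h3, hff₀⟩) h2
  · intro s t hsI htI
    rcases le_total s t with h | h
    · rw [abs_of_nonpos (by linarith), neg_sub]
      exact HEQ s t hsI htI h
    · rw [abs_of_nonneg (by linarith), bdist_symm hA hAcl]
      exact HEQ t s htI hsI h
end

section
/- Let X be a metric space and a_0 ∈ X a point such that the pseudometric space D_∞(X,{a_0}) with the bottleneck distance is geodesic. Then any two points x, y ∈ X satisfying d(x,y) < d(x,a_0) or y = a_0 can be joined by a geodesic in X. -/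
open scoped ENNReal
open Filter Metric Set

lemma le_of_small {a b c : ℝ} (hc : 0 < c) (h : ∀ ε, 0 < ε → ε < c → a < b + ε) : a ≤ b := by
  by_contra hab
  push_neg at hab
  have h1 : 0 < min ((a - b) / 2) (c / 2) := lt_min (by linarith) (by linarith)
  have h2 := h _ h1 (lt_of_le_of_lt (min_le_right _ _) (by linarith))
  have h3 : min ((a - b) / 2) (c / 2) ≤ (a - b) / 2 := min_le_left _ _
  linarith

lemma exists_matching {X : Type*} [MetricSpace X] {A : Set X} {u v : ℕ → X} {r : ℝ}
    (h : bdist A u v ≤ ENNReal.ofReal r) {ε : ℝ} (hε : 0 < ε) (hr : 0 ≤ r) :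
    ∃ (α β : ℕ → X) (e : (ℕ ⊕ ℕ) ≃ (ℕ ⊕ ℕ)), (∀ n, α n ∈ A) ∧ (∀ n, β n ∈ A) ∧
      ∀ n, dist (Sum.elim u α n) (Sum.elim v β (e n)) < r + ε := by
  have hlt : bdist A u v < ENNReal.ofReal (r + ε) :=
    h.trans_lt (by rw [ENNReal.ofReal_lt_ofReal_iff (by linarith)]; linarith)
  rw [bdist, iInf_lt_iff] at hlt
  obtain ⟨α, hlt⟩ := hlt
  rw [iInf_lt_iff] at hlt
  obtain ⟨hα, hlt⟩ := hlt
  rw [iInf_lt_iff] at hlt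
  obtain ⟨β, hlt⟩ := hlt
  rw [iInf_lt_iff] at hlt
  obtain ⟨hβ, hlt⟩ := hlt
  rw [iInf_lt_iff] at hlt
  obtain ⟨e, hlt⟩ := hlt
  refine ⟨α, β, e, hα, hβ, fun n => ?_⟩
  have := (le_iSup _ n).trans_lt hlt
  rwa [edist_lt_ofReal] at this

lemma bdist_le {X : Type*} [MetricSpace X] {A : Set X} {u v : ℕ → X} {a₀ : X} (ha : a₀ ∈ A)
    {r : ℝ} (h : ∀ n, dist (u n) (v n) ≤ r) : bdist A u v ≤ ENNReal.ofReal r := by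
  refine iInf_le_of_le (fun _ => a₀) (iInf_le_of_le (fun _ => ha) (iInf_le_of_le (fun _ => a₀)
    (iInf_le_of_le (fun _ => ha) (iInf_le_of_le (Equiv.refl _) (iSup_le fun n => ?_)))))
  cases n with
  | inl m =>
      simp only [Equiv.refl_apply, Sum.elim_inl]
      rw [edist_dist]
      exact ENNReal.ofReal_le_ofReal (h m)
  | inr k =>
      simp only [Equiv.refl_apply, Sum.elim_inr, edist_self]
      exact zero_le

lemma diag_single {X : Type*} [MetricSpace X] {a₀ x : X} (hx : x ≠ a₀) {h : ℕ → X}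
    (he : DiagEquiv {a₀} h (fun n => if n = 0 then x else a₀)) :
    ∃ i₀, h i₀ = x ∧ ∀ j, j ≠ i₀ → h j = a₀ := by
  obtain ⟨e, hev⟩ := he
  have h0 : (if (0:ℕ) = 0 then x else a₀) ∉ ({a₀} : Set X) := by simp [hx]
  refine ⟨(e.symm ⟨0, h0⟩).1, ?_, ?_⟩
  · have := hev (e.symm ⟨0, h0⟩)
    rw [e.apply_symm_apply] at this
    simpa using this.symm
  · intro j hj
    by_contra hja
    have hjm : h j ∉ ({a₀} : Set X) := by simpa using hja
    have hv := hev ⟨j, hjm⟩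
    by_cases h1 : (e ⟨j, hjm⟩).1 = 0
    · apply hj
      have : e ⟨j, hjm⟩ = ⟨0, h0⟩ := Subtype.ext h1
      have : (⟨j, hjm⟩ : {n // h n ∉ ({a₀} : Set X)}) = e.symm ⟨0, h0⟩ := by
        rw [← this, e.symm_apply_apply]
      exact congrArg Subtype.val this
    · simp only [if_neg h1] at hv
      exact hja hv.symm

lemma diag_empty {X : Type*} [MetricSpace X] {a₀ : X} {h : ℕ → X}
    (he : DiagEquiv {a₀} h (fun _ => a₀)) : ∀ n, h n = a₀ := by
  obtain ⟨e, _⟩ := he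
  intro n
  by_contra hn
  have hm : h n ∉ ({a₀} : Set X) := by simpa using hn
  exact (e ⟨n, hm⟩).2 (mem_singleton _)

lemma case1 {X : Type*} [MetricSpace X] (a₀ : X)
    (hgeo : ∀ f g : ℕ → X, IsDiagram {a₀} f → IsDiagram {a₀} g →
      ∃ Γ : ℝ → ℕ → X, DiagEquiv {a₀} (Γ 0) f ∧ DiagEquiv {a₀} (Γ 1) g ∧
        (∀ t ∈ Set.Icc (0:ℝ) 1, IsDiagram {a₀} (Γ t)) ∧
        ∀ s t : ℝ, s ∈ Set.Icc (0:ℝ) 1 → t ∈ Set.Icc (0:ℝ) 1 →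
          bdist {a₀} (Γ s) (Γ t) = ENNReal.ofReal |s - t| * bdist {a₀} f g)
    (x y : X) (hlt : dist x y < dist x a₀) :
    ∃ γ : ℝ → X, γ 0 = x ∧ γ 1 = y ∧
      ∀ s t : ℝ, s ∈ Set.Icc (0:ℝ) 1 → t ∈ Set.Icc (0:ℝ) 1 →
        dist (γ s) (γ t) = |s - t| * dist x y := by
  classical
  set d := dist x y with hd
  set D := dist x a₀ with hD
  have hd0 : 0 ≤ d := dist_nonneg
  have hc : 0 < D - d := by linarith
  have hx : x ≠ a₀ := by
    intro h
    have : D = 0 := by rw [hD, h, dist_self]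
    linarith
  have hy : y ≠ a₀ := by
    intro h
    have : d = D := by rw [hd, hD, h]
    linarith
  set f : ℕ → X := fun n => if n = 0 then x else a₀ with hf
  set g : ℕ → X := fun n => if n = 0 then y else a₀ with hg
  have hfg : bdist {a₀} f g ≤ ENNReal.ofReal d := by
    refine bdist_le (mem_singleton a₀) fun n => ?_
    by_cases hn : n = 0
    · simp [hf, hg, hn, hd]
    · simp [hf, hg, hn, hd]
  have hfD : IsDiagram {a₀} f := by
    refine ⟨fun _ => a₀, fun n => mem_singleton _, ?_⟩
    have hle : bdist {a₀} f (fun _ => a₀) ≤ ENNReal.ofReal D := by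
      refine bdist_le (mem_singleton a₀) fun n => ?_
      by_cases hn : n = 0
      · simp [hf, hn, hD]
      · simp [hf, hn, hD]
    exact ne_top_of_le_ne_top ENNReal.ofReal_ne_top hle
  have hgD : IsDiagram {a₀} g := by
    refine ⟨fun _ => a₀, fun n => mem_singleton _, ?_⟩
    have hle : bdist {a₀} g (fun _ => a₀) ≤ ENNReal.ofReal (dist y a₀) := by
      refine bdist_le (mem_singleton a₀) fun n => ?_
      by_cases hn : n = 0
      · simp [hg, hn]
      · simp [hg, hn]
    exact ne_top_of_le_ne_top ENNReal.ofReal_ne_top hle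
  obtain ⟨Γ, hΓ0, hΓ1, -, hΓd⟩ := hgeo f g hfD hgD
  have key : ∀ s t : ℝ, s ∈ Icc (0:ℝ) 1 → t ∈ Icc (0:ℝ) 1 →
      bdist {a₀} (Γ s) (Γ t) ≤ ENNReal.ofReal (|s - t| * d) := by
    intro s t hs ht
    rw [hΓd s t hs ht, ENNReal.ofReal_mul (abs_nonneg _)]
    exact mul_le_mul_right hfg _
  have keyt0 : ∀ t : ℝ, t ∈ Icc (0:ℝ) 1 →
      bdist {a₀} (Γ t) (Γ 0) ≤ ENNReal.ofReal (t * d) := by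
    intro t ht
    have := key t 0 ht (left_mem_Icc.2 zero_le_one)
    rwa [sub_zero, abs_of_nonneg ht.1] at this
  have keyt1 : ∀ t : ℝ, t ∈ Icc (0:ℝ) 1 →
      bdist {a₀} (Γ t) (Γ 1) ≤ ENNReal.ofReal ((1 - t) * d) := by
    intro t ht
    have := key t 1 ht (right_mem_Icc.2 zero_le_one)
    rwa [abs_of_nonpos (by linarith [ht.2]), neg_sub] at this
  obtain ⟨i₀, hi₀, hi₀'⟩ := diag_single hx (by rw [hf] at hΓ0; exact hΓ0)
  obtain ⟨i₁, hi₁, hi₁'⟩ := diag_single hy (by rw [hg] at hΓ1; exact hΓ1)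
  set ε₀ := (D - d) / 4 with hε₀
  have hε₀p : 0 < ε₀ := by rw [hε₀]; linarith
  have hQex : ∀ t, t ∈ Icc (0:ℝ) 1 → ∃ u, (∃ m, Γ t m = u) ∧
      dist u x ≤ t * d + ε₀ ∧ dist u y ≤ (1 - t) * d + ε₀ := by
    intro t ht
    obtain ⟨ht0, ht1⟩ := ht
    obtain ⟨α, β, e, hα, hβ, hm⟩ :=
      exists_matching (keyt0 t ⟨ht0, ht1⟩) hε₀p (mul_nonneg ht0 hd0)
    have hpart := hm (e.symm (Sum.inl i₀))
    rw [Equiv.apply_symm_apply] at hpart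
    rcases hn : e.symm (Sum.inl i₀) with m | k
    · rw [hn] at hpart
      simp only [Sum.elim_inl, hi₀] at hpart
      obtain ⟨α', β', e', hα', hβ', hm'⟩ :=
        exists_matching (keyt1 t ⟨ht0, ht1⟩) hε₀p (mul_nonneg (by linarith) hd0)
      have hp2 := hm' (Sum.inl m)
      rw [Sum.elim_inl] at hp2
      by_cases hce : e' (Sum.inl m) = Sum.inl i₁
      · rw [hce, Sum.elim_inl, hi₁] at hp2
        exact ⟨Γ t m, ⟨m, rfl⟩, hpart.le, hp2.le⟩
      · exfalso
        have hva : Sum.elim (Γ 1) β' (e' (Sum.inl m)) = a₀ := by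
          rcases hq : e' (Sum.inl m) with j | k
          · rw [Sum.elim_inl]
            exact hi₁' j (by rintro rfl; exact hce hq)
          · rw [Sum.elim_inr]; exact hβ' k
        rw [hva] at hp2
        have t1 := dist_triangle x (Γ t m) a₀
        rw [dist_comm x (Γ t m)] at t1
        have hring : t * d + (1 - t) * d = d := by ring
        rw [hε₀] at hpart hp2
        linarith [hD]
    · exfalso
      rw [hn] at hpart
      simp only [Sum.elim_inr, Sum.elim_inl, hi₀] at hpart
      have hak : α k = a₀ := hα k
      rw [hak, dist_comm] at hpart
      have htd : t * d ≤ d := by nlinarith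
      rw [hε₀] at hpart
      linarith [hD]
  set γ : ℝ → X := fun t =>
    if h : 0 < t ∧ t < 1 then Classical.choose (hQex t ⟨h.1.le, h.2.le⟩)
    else if t ≤ 0 then x else y with hγ
  have hγ0 : γ 0 = x := by
    rw [hγ]
    norm_num
  have hγ1 : γ 1 = y := by
    rw [hγ]
    norm_num
  have hQγ : ∀ t, t ∈ Icc (0:ℝ) 1 → (∃ m, Γ t m = γ t) ∧
      dist (γ t) x ≤ t * d + ε₀ ∧ dist (γ t) y ≤ (1 - t) * d + ε₀ := by
    intro t ht
    by_cases h : 0 < t ∧ t < 1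
    · have hγt : γ t = Classical.choose (hQex t ⟨h.1.le, h.2.le⟩) := by
        simp only [hγ]
        rw [dif_pos h]
      rw [hγt]
      exact Classical.choose_spec (hQex t ⟨h.1.le, h.2.le⟩)
    · push_neg at h
      rcases eq_or_lt_of_le ht.1 with h0 | h0
      · subst h0
        rw [hγ0]
        refine ⟨⟨i₀, hi₀⟩, by simp [dist_self]; positivity, ?_⟩
        rw [← hd]
        simp only [sub_zero, one_mul]
        linarith
      · have h1 : t = 1 := le_antisymm ht.2 (h h0)
        subst h1
        rw [hγ1]
        refine ⟨⟨i₁, hi₁⟩, ?_, by simp [dist_self]; positivity⟩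
        rw [dist_comm, ← hd]
        simp only [one_mul]
        linarith
  have hup : ∀ s t : ℝ, s ∈ Icc (0:ℝ) 1 → t ∈ Icc (0:ℝ) 1 → s ≤ t →
      dist (γ s) (γ t) ≤ (t - s) * d := by
    intro s t hs ht hst
    rcases eq_or_lt_of_le hst with rfl | hst'
    · simp
    · obtain ⟨⟨i, hiv⟩, husx, husy⟩ := hQγ s hs
      obtain ⟨⟨m, hmv⟩, hvtx, hvty⟩ := hQγ t ht
      refine le_of_small (show (0:ℝ) < (D - d)/4 by linarith) fun ε hε hεc => ?_
      have k3 : bdist {a₀} (Γ s) (Γ t) ≤ ENNReal.ofReal ((t - s) * d) := by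
        have := key s t hs ht
        rwa [abs_of_nonpos (by linarith), neg_sub] at this
      obtain ⟨α, β, e, hα, hβ, hm⟩ := exists_matching k3 hε (mul_nonneg (by linarith) hd0)
      have h1 := hm (Sum.inl i)
      rw [Sum.elim_inl, hiv] at h1
      rcases h3 : e (Sum.inl i) with j | k
      · rw [h3, Sum.elim_inl] at h1
        by_cases hjv : Γ t j = γ t
        · rwa [hjv] at h1
        · exfalso
          have hjm : j ≠ m := fun hh => hjv (hh ▸ hmv)
          obtain ⟨α', β', e', hα', hβ', hm'⟩ :=
            exists_matching (keyt1 t ht) hε₀p (mul_nonneg (by linarith [ht.2]) hd0)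
          by_cases hme : e' (Sum.inl m) = Sum.inl i₁
          · have hja : Sum.elim (Γ 1) β' (e' (Sum.inl j)) = a₀ := by
              rcases hq : e' (Sum.inl j) with j' | k'
              · rw [Sum.elim_inl]
                refine hi₁' j' fun hh => ?_
                apply hjm
                have heq : e' (Sum.inl j) = e' (Sum.inl m) := by rw [hq, hme, hh]
                exact Sum.inl.inj (e'.injective heq)
              · rw [Sum.elim_inr]; exact hβ' k'
            have h4 := hm' (Sum.inl j)
            rw [Sum.elim_inl, hja] at h4
            have t1 := dist_triangle x (γ s) a₀
            have t2 := dist_triangle (γ s) (Γ t j) a₀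
            rw [dist_comm x (γ s)] at t1
            have hring : s * d + ((t - s) * d + (1 - t) * d) = d := by ring
            rw [hε₀] at husx h4
            linarith [hD]
          · have hma : Sum.elim (Γ 1) β' (e' (Sum.inl m)) = a₀ := by
              rcases hq : e' (Sum.inl m) with j' | k'
              · rw [Sum.elim_inl]
                exact hi₁' j' fun hh => hme (by rw [hq, hh])
              · rw [Sum.elim_inr]; exact hβ' k'
            have h5 := hm' (Sum.inl m)
            rw [Sum.elim_inl, hma, hmv] at h5
            have t1 := dist_triangle x (γ t) a₀
            rw [dist_comm x (γ t)] at t1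
            have hring : t * d + (1 - t) * d = d := by ring
            rw [hε₀] at hvtx h5
            linarith [hD]
      · exfalso
        rw [h3, Sum.elim_inr] at h1
        have hbk : β k = a₀ := hβ k
        rw [hbk] at h1
        have t1 := dist_triangle x (γ s) a₀
        rw [dist_comm x (γ s)] at t1
        have hring : s * d + (t - s) * d = t * d := by ring
        have htd : t * d ≤ d := by nlinarith [ht.2]
        rw [hε₀] at husx
        linarith [hD]
  have main : ∀ s t : ℝ, s ∈ Icc (0:ℝ) 1 → t ∈ Icc (0:ℝ) 1 → s ≤ t →
      dist (γ s) (γ t) = (t - s) * d := by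
    intro s t hs ht hst
    refine le_antisymm (hup s t hs ht hst) ?_
    have l1 : dist (γ 0) (γ s) ≤ (s - 0) * d :=
      hup 0 s (left_mem_Icc.2 zero_le_one) hs hs.1
    have l2 : dist (γ t) (γ 1) ≤ (1 - t) * d :=
      hup t 1 ht (right_mem_Icc.2 zero_le_one) ht.2
    have l3 : dist (γ 0) (γ 1) ≤ dist (γ 0) (γ s) + dist (γ s) (γ t) + dist (γ t) (γ 1) :=
      dist_triangle4 _ _ _ _
    rw [hγ0] at l1 l3
    rw [hγ1] at l2 l3
    have hring : (s - 0) * d + (t - s) * d + (1 - t) * d = d := by ring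
    linarith [hd]
  refine ⟨γ, hγ0, hγ1, ?_⟩
  intro s t hs ht
  rcases le_total s t with h | h
  · rw [main s t hs ht h, abs_of_nonpos (by linarith), neg_sub]
  · rw [dist_comm, main t s ht hs h, abs_of_nonneg (by linarith)]

lemma lemA {X : Type*} [MetricSpace X] (a₀ : X)
    (hgeo : ∀ f g : ℕ → X, IsDiagram {a₀} f → IsDiagram {a₀} g →
      ∃ Γ : ℝ → ℕ → X, DiagEquiv {a₀} (Γ 0) f ∧ DiagEquiv {a₀} (Γ 1) g ∧
        (∀ t ∈ Set.Icc (0:ℝ) 1, IsDiagram {a₀} (Γ t)) ∧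
        ∀ s t : ℝ, s ∈ Set.Icc (0:ℝ) 1 → t ∈ Set.Icc (0:ℝ) 1 →
          bdist {a₀} (Γ s) (Γ t) = ENNReal.ofReal |s - t| * bdist {a₀} f g)
    (z : X) (hz : z ≠ a₀) :
    ∃ δ : ℝ → X, δ 0 = z ∧
      (∀ t, 0 ≤ t → t < 1/2 → dist (δ t) a₀ = (1 - t) * dist z a₀) ∧
      (∀ s t, 0 ≤ s → s < 1/2 → 0 ≤ t → t < 1/2 →
        dist (δ s) (δ t) = |s - t| * dist z a₀) := by
  classical
  set D := dist z a₀ with hD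
  have hD0 : 0 < D := dist_pos.2 hz
  set f : ℕ → X := fun n => if n = 0 then z else a₀ with hf
  set g : ℕ → X := fun _ => a₀ with hg
  have hfg : bdist {a₀} f g ≤ ENNReal.ofReal D := by
    refine bdist_le (mem_singleton a₀) fun n => ?_
    by_cases hn : n = 0
    · simp [hf, hg, hn, hD]
    · simp [hf, hg, hn, hD]
  have hfD : IsDiagram {a₀} f := by
    refine ⟨g, fun n => by simp [hg], ?_⟩
    exact ne_top_of_le_ne_top ENNReal.ofReal_ne_top hfg
  have hgD : IsDiagram {a₀} g := by
    refine ⟨g, fun n => by simp [hg], ?_⟩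
    have hle : bdist {a₀} g g ≤ ENNReal.ofReal 0 :=
      bdist_le (mem_singleton a₀) fun n => by simp [hg]
    exact ne_top_of_le_ne_top ENNReal.ofReal_ne_top hle
  obtain ⟨Γ, hΓ0, hΓ1, -, hΓd⟩ := hgeo f g hfD hgD
  have key : ∀ s t : ℝ, s ∈ Icc (0:ℝ) 1 → t ∈ Icc (0:ℝ) 1 →
      bdist {a₀} (Γ s) (Γ t) ≤ ENNReal.ofReal (|s - t| * D) := by
    intro s t hs ht
    rw [hΓd s t hs ht, ENNReal.ofReal_mul (abs_nonneg _)]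
    exact mul_le_mul_right hfg _
  have keyt0 : ∀ t : ℝ, t ∈ Icc (0:ℝ) 1 →
      bdist {a₀} (Γ t) (Γ 0) ≤ ENNReal.ofReal (t * D) := by
    intro t ht
    have := key t 0 ht (left_mem_Icc.2 zero_le_one)
    rwa [sub_zero, abs_of_nonneg ht.1] at this
  have keyt1 : ∀ t : ℝ, t ∈ Icc (0:ℝ) 1 →
      bdist {a₀} (Γ t) (Γ 1) ≤ ENNReal.ofReal ((1 - t) * D) := by
    intro t ht
    have := key t 1 ht (right_mem_Icc.2 zero_le_one)
    rwa [abs_of_nonpos (by linarith [ht.2]), neg_sub] at this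
  obtain ⟨i₀, hi₀, hi₀'⟩ := diag_single hz (by rw [hf] at hΓ0; exact hΓ0)
  have hall : ∀ n, Γ 1 n = a₀ := diag_empty (by rw [hg] at hΓ1; exact hΓ1)
  have hPex : ∀ t, 0 ≤ t → t < 1/2 → ∃ u,
      dist u z = t * D ∧ dist u a₀ = (1 - t) * D ∧ ∃ m, Γ t m = u := by
    intro t ht0 ht2
    have htI : t ∈ Icc (0:ℝ) 1 := ⟨ht0, by linarith⟩
    have hεp : 0 < (1 - 2*t)*D/2 := by nlinarith
    obtain ⟨α, β, e, hα, hβ, hm⟩ := exists_matching (keyt0 t htI) hεp (mul_nonneg ht0 hD0.le)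
    have hpart := hm (e.symm (Sum.inl i₀))
    rw [Equiv.apply_symm_apply] at hpart
    rcases hn : e.symm (Sum.inl i₀) with m | k
    · rw [hn] at hpart
      simp only [Sum.elim_inl, hi₀] at hpart
      have hua : dist (Γ t m) a₀ ≤ (1 - t) * D := by
        refine le_of_small one_pos fun ε' hε' _ => ?_
        obtain ⟨α', β', e', hα', hβ', hm'⟩ :=
          exists_matching (keyt1 t htI) hε' (mul_nonneg (by linarith) hD0.le)
        have h2 := hm' (Sum.inl m)
        rw [Sum.elim_inl] at h2
        have hva : Sum.elim (Γ 1) β' (e' (Sum.inl m)) = a₀ := by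
          rcases hq : e' (Sum.inl m) with j | k'
          · rw [Sum.elim_inl]; exact hall j
          · rw [Sum.elim_inr]; exact hβ' k'
        rwa [hva] at h2
      have huz : dist (Γ t m) z ≤ t * D := by
        refine le_of_small hεp fun ε' hε' hε'c => ?_
        obtain ⟨α', β', e', hα', hβ', hm'⟩ :=
          exists_matching (keyt0 t htI) hε' (mul_nonneg ht0 hD0.le)
        have h2 := hm' (Sum.inl m)
        rw [Sum.elim_inl] at h2
        rcases hq : e' (Sum.inl m) with j | k'
        · by_cases hji : j = i₀
          · rw [hq, hji, Sum.elim_inl, hi₀] at h2; exact h2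
          · exfalso
            rw [hq, Sum.elim_inl, hi₀' j hji] at h2
            have htr := dist_triangle z (Γ t m) a₀
            rw [dist_comm z (Γ t m)] at htr
            linarith
        · exfalso
          rw [hq, Sum.elim_inr, show β' k' = a₀ from hβ' k'] at h2
          have htr := dist_triangle z (Γ t m) a₀
          rw [dist_comm z (Γ t m)] at htr
          linarith
      have htr := dist_triangle z (Γ t m) a₀
      rw [dist_comm z (Γ t m)] at htr
      have huz' : dist (Γ t m) z = t * D := le_antisymm huz (by linarith)
      have hua' : dist (Γ t m) a₀ = (1 - t) * D := le_antisymm hua (by linarith)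
      exact ⟨Γ t m, huz', hua', m, rfl⟩
    · exfalso
      rw [hn] at hpart
      simp only [Sum.elim_inr, Sum.elim_inl, hi₀] at hpart
      rw [show α k = a₀ from hα k, dist_comm] at hpart
      linarith
  have hPpair : ∀ s t u v, 0 ≤ s → 0 ≤ t → t < 1/2 → s < t →
      dist u z = s * D → dist u a₀ = (1 - s) * D → (∃ i, Γ s i = u) →
      dist v a₀ = (1 - t) * D → (∃ m, Γ t m = v) →
      dist u v ≤ (t - s) * D := by
    intro s t u v hs0 ht0 ht2 hst huz hua hiu hmv'
    intro hmv
    obtain ⟨i, hiv⟩ := hiu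
    obtain ⟨m, hmv⟩ := hmv
    have hsI : s ∈ Icc (0:ℝ) 1 := ⟨hs0, by linarith⟩
    have htI : t ∈ Icc (0:ℝ) 1 := ⟨ht0, by linarith⟩
    have hgap : 0 < (1 - 2*t)*D/2 := by nlinarith
    refine le_of_small hgap fun ε hε hεc => ?_
    have kst : bdist {a₀} (Γ s) (Γ t) ≤ ENNReal.ofReal ((t - s)*D) := by
      have := key s t hsI htI
      rwa [abs_of_nonpos (by linarith), neg_sub] at this
    obtain ⟨α, β, e, hα, hβ, hm⟩ := exists_matching kst hε (mul_nonneg (by linarith) hD0.le)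
    have h1 := hm (Sum.inl i)
    rw [Sum.elim_inl, hiv] at h1
    rcases h3 : e (Sum.inl i) with j | k
    · rw [h3, Sum.elim_inl] at h1
      by_cases hjv : Γ t j = v
      · rwa [hjv] at h1
      · exfalso
        have hjm : j ≠ m := fun hh => hjv (hh ▸ hmv)
        obtain ⟨α', β', e', hα', hβ', hm'⟩ :=
          exists_matching (keyt0 t htI) hgap (mul_nonneg ht0 hD0.le)
        by_cases hme : e' (Sum.inl m) = Sum.inl i₀
        · have hja : Sum.elim (Γ 0) β' (e' (Sum.inl j)) = a₀ := by
            rcases hq : e' (Sum.inl j) with j' | k'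
            · rw [Sum.elim_inl]
              refine hi₀' j' fun hh => hjm ?_
              have heq : e' (Sum.inl j) = e' (Sum.inl m) := by rw [hq, hme, hh]
              exact Sum.inl.inj (e'.injective heq)
            · rw [Sum.elim_inr]; exact hβ' k'
          have h4 := hm' (Sum.inl j)
          rw [Sum.elim_inl, hja] at h4
          have htr := dist_triangle u (Γ t j) a₀
          linarith
        · have hma : Sum.elim (Γ 0) β' (e' (Sum.inl m)) = a₀ := by
            rcases hq : e' (Sum.inl m) with j' | k'
            · rw [Sum.elim_inl]; exact hi₀' j' fun hh => hme (by rw [hq, hh])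
            · rw [Sum.elim_inr]; exact hβ' k'
          have h5 := hm' (Sum.inl m)
          rw [Sum.elim_inl, hma, hmv] at h5
          linarith
    · exfalso
      rw [h3, Sum.elim_inr, show β k = a₀ from hβ k] at h1
      linarith
  set δ : ℝ → X := fun t =>
    if h : 0 ≤ t ∧ t < 1/2 then Classical.choose (hPex t h.1 h.2) else z with hδ
  have hδP : ∀ t, 0 ≤ t → t < 1/2 → dist (δ t) z = t*D ∧ dist (δ t) a₀ = (1-t)*D ∧
      ∃ m, Γ t m = δ t := by
    intro t h0 h2
    have hδt : δ t = Classical.choose (hPex t h0 h2) := by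
      simp only [hδ]
      rw [dif_pos (⟨h0, h2⟩ : 0 ≤ t ∧ t < 1/2)]
    rw [hδt]
    exact Classical.choose_spec (hPex t h0 h2)
  have hδ0 : δ 0 = z := by
    have h := (hδP 0 le_rfl (by norm_num)).1
    rw [zero_mul] at h
    exact eq_of_dist_eq_zero h
  have main : ∀ s t, 0 ≤ s → s < 1/2 → 0 ≤ t → t < 1/2 → s < t →
      dist (δ s) (δ t) = (t - s) * D := by
    intro s t hs0 hs2 ht0 ht2 hst
    obtain ⟨hsz, hsa, hsm⟩ := hδP s hs0 hs2
    obtain ⟨htz, hta, htm⟩ := hδP t ht0 ht2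
    refine le_antisymm (hPpair s t (δ s) (δ t) hs0 ht0 ht2 hst hsz hsa hsm hta htm) ?_
    have hlow := abs_dist_sub_le (δ s) (δ t) a₀
    rw [hsa, hta] at hlow
    have hre : (1-s)*D - (1-t)*D = (t-s)*D := by ring
    rw [hre, abs_of_nonneg (by nlinarith)] at hlow
    exact hlow
  refine ⟨δ, hδ0, fun t h0 h2 => (hδP t h0 h2).2.1, ?_⟩
  intro s t hs0 hs2 ht0 ht2
  rcases lt_trichotomy s t with h | h | h
  · rw [main s t hs0 hs2 ht0 ht2 h, abs_of_nonpos (by linarith), neg_sub]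
  · rw [h]
    simp
  · rw [dist_comm, main t s ht0 ht2 hs0 hs2 h, abs_of_nonneg (by linarith)]

lemma case2 {X : Type*} [MetricSpace X] (a₀ : X)
    (hgeo : ∀ f g : ℕ → X, IsDiagram {a₀} f → IsDiagram {a₀} g →
      ∃ Γ : ℝ → ℕ → X, DiagEquiv {a₀} (Γ 0) f ∧ DiagEquiv {a₀} (Γ 1) g ∧
        (∀ t ∈ Set.Icc (0:ℝ) 1, IsDiagram {a₀} (Γ t)) ∧
        ∀ s t : ℝ, s ∈ Set.Icc (0:ℝ) 1 → t ∈ Set.Icc (0:ℝ) 1 →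
          bdist {a₀} (Γ s) (Γ t) = ENNReal.ofReal |s - t| * bdist {a₀} f g)
    (x : X) :
    ∃ γ : ℝ → X, γ 0 = x ∧ γ 1 = a₀ ∧
      ∀ s t : ℝ, s ∈ Set.Icc (0:ℝ) 1 → t ∈ Set.Icc (0:ℝ) 1 →
        dist (γ s) (γ t) = |s - t| * dist x a₀ := by
  classical
  by_cases hx : x = a₀
  · refine ⟨fun _ => a₀, by rw [hx], rfl, fun s t _ _ => by simp [hx]⟩
  · set D := dist x a₀ with hD
    have hD0 : 0 < D := dist_pos.2 hx
    have hstep : ∀ z : X, z ≠ a₀ → ∃ δ : ℝ → X, δ 0 = z ∧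
        (∀ t, 0 ≤ t → t < 1/2 → dist (δ t) a₀ = (1 - t) * dist z a₀) ∧
        (∀ s t, 0 ≤ s → s < 1/2 → 0 ≤ t → t < 1/2 →
          dist (δ s) (δ t) = |s - t| * dist z a₀) := fun z hz => lemA a₀ hgeo z hz
    set F : X → ℝ → X := fun z => if h : z ≠ a₀ then Classical.choose (hstep z h) else fun _ => a₀
      with hF
    set xs : ℕ → X := fun k => Nat.rec x (fun _ ih => F ih (1/4)) k with hxs
    have hxs0 : xs 0 = x := rfl
    have hxsS : ∀ k, xs (k+1) = F (xs k) (1/4) := fun k => rfl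
    have hrad : ∀ k, dist (xs k) a₀ = (3/4)^k * D := by
      intro k
      induction k with
      | zero => simp [hxs0, hD]
      | succ n ih =>
        have hne : xs n ≠ a₀ := by
          intro hh
          rw [hh, dist_self] at ih
          have hp : (0:ℝ) < (3/4)^n * D := by positivity
          linarith
        have hFx : F (xs n) = Classical.choose (hstep (xs n) hne) := by
          simp only [hF]
          rw [dif_pos hne]
        have hspec := Classical.choose_spec (hstep (xs n) hne)
        rw [hxsS n, hFx, hspec.2.1 (1/4) (by norm_num) (by norm_num), ih]
        ring
    have hne : ∀ k, xs k ≠ a₀ := by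
      intro k hh
      have h := hrad k
      rw [hh, dist_self] at h
      have hp : (0:ℝ) < (3/4)^k * D := by positivity
      linarith
    set pc : ℕ → ℝ → X := fun k => F (xs k) with hpc
    have hpcs : ∀ k : ℕ, pc k 0 = xs k ∧
        (∀ t, 0 ≤ t → t < 1/2 → dist (pc k t) a₀ = (1 - t) * ((3/4)^k * D)) ∧
        (∀ s t, 0 ≤ s → s < 1/2 → 0 ≤ t → t < 1/2 →
          dist (pc k s) (pc k t) = |s - t| * ((3/4)^k * D)) := by
      intro k
      have hFx : pc k = Classical.choose (hstep (xs k) (hne k)) := by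
        simp only [hpc, hF]
        rw [dif_pos (hne k)]
      have hspec := Classical.choose_spec (hstep (xs k) (hne k))
      rw [hFx]
      refine ⟨hspec.1, fun t h0 h2 => ?_, fun s t a b c d => ?_⟩
      · rw [hspec.2.1 t h0 h2, hrad k]
      · rw [hspec.2.2 s t a b c d, hrad k]
    have hxsS' : ∀ k, xs (k+1) = pc k (1/4) := fun k => hxsS k
    have hDk : ∀ k : ℕ, (0:ℝ) < (3/4)^k * D := fun k => by positivity
    set q : ℕ → ℝ → X := fun k ρ => pc k (1 - ρ / ((3/4)^k * D)) with hq
    have htmem : ∀ (k : ℕ) (ρ : ℝ), (3/4)*((3/4)^k*D) < ρ → ρ ≤ (3/4)^k*D →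
        0 ≤ 1 - ρ/((3/4)^k*D) ∧ 1 - ρ/((3/4)^k*D) < 1/2 := by
      intro k ρ h1 h2
      constructor
      · have := (div_le_one (hDk k)).2 h2
        linarith
      · have := (lt_div_iff₀ (hDk k)).2 (show (3/4)*((3/4)^k*D) < ρ from h1)
        -- this : 3/4 < ρ / ((3/4)^k * D)  (since (3/4) * Dk < ρ)
        linarith
    have hqrad : ∀ (k : ℕ) (ρ : ℝ), (3/4)*((3/4)^k*D) < ρ → ρ ≤ (3/4)^k*D →
        dist (q k ρ) a₀ = ρ := by
      intro k ρ h1 h2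
      obtain ⟨m1, m2⟩ := htmem k ρ h1 h2
      have := (hpcs k).2.1 _ m1 m2
      simp only [hq]
      rw [this]
      field_simp
      ring
    have hqsame : ∀ (k : ℕ) (ρ σ : ℝ), (3/4)*((3/4)^k*D) < ρ → ρ ≤ (3/4)^k*D →
        (3/4)*((3/4)^k*D) < σ → σ ≤ (3/4)^k*D →
        dist (q k ρ) (q k σ) = |ρ - σ| := by
      intro k ρ σ h1 h2 h3 h4
      obtain ⟨m1, m2⟩ := htmem k ρ h1 h2
      obtain ⟨m3, m4⟩ := htmem k σ h3 h4
      have := (hpcs k).2.2 _ _ m1 m2 m3 m4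
      simp only [hq]
      rw [this]
      have hre : (1 - ρ/((3/4)^k*D)) - (1 - σ/((3/4)^k*D)) = -((ρ - σ)/((3/4)^k*D)) := by
        field_simp
        ring
      rw [hre, abs_neg, abs_div, abs_of_pos (hDk k), div_mul_cancel₀ _ (hDk k).ne']
    have hqx : ∀ (k : ℕ) (ρ : ℝ), (3/4)*((3/4)^k*D) < ρ → ρ ≤ (3/4)^k*D →
        dist (xs k) (q k ρ) = (3/4)^k*D - ρ := by
      intro k ρ h1 h2
      obtain ⟨m1, m2⟩ := htmem k ρ h1 h2
      have := (hpcs k).2.2 0 _ le_rfl (by norm_num) m1 m2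
      rw [(hpcs k).1] at this
      simp only [hq]
      rw [this, zero_sub, abs_neg, abs_of_nonneg m1]
      field_simp
    have hqnext : ∀ (k : ℕ) (ρ : ℝ), (3/4)*((3/4)^k*D) < ρ → ρ ≤ (3/4)^k*D →
        dist (q k ρ) (xs (k+1)) = ρ - (3/4)*((3/4)^k*D) := by
      intro k ρ h1 h2
      obtain ⟨m1, m2⟩ := htmem k ρ h1 h2
      have := (hpcs k).2.2 _ (1/4) m1 m2 (by norm_num) (by norm_num)
      rw [hxsS' k]
      simp only [hq]
      rw [this]
      have hgt : (3:ℝ)/4 < ρ/((3/4)^k*D) := (lt_div_iff₀ (hDk k)).2 h1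
      have habs : |1 - ρ/((3/4)^k*D) - 1/4| = ρ/((3/4)^k*D) - 3/4 := by
        rw [abs_of_nonpos (by linarith)]
        ring
      rw [habs, sub_mul, div_mul_cancel₀ _ (hDk k).ne']
    have hstepd : ∀ k : ℕ, dist (xs k) (xs (k+1)) = (1/4)*((3/4)^k*D) := by
      intro k
      have := (hpcs k).2.2 0 (1/4) le_rfl (by norm_num) (by norm_num) (by norm_num)
      rw [(hpcs k).1] at this
      rw [hxsS' k, this]
      norm_num
    have hchain : ∀ (k n : ℕ) (ρ : ℝ), (3/4)*((3/4)^k*D) < ρ → ρ ≤ (3/4)^k*D →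
        dist (q k ρ) (xs (k+1+n)) ≤ ρ - (3/4)^(k+1+n)*D := by
      intro k n ρ h1 h2
      induction n with
      | zero =>
        rw [Nat.add_zero, hqnext k ρ h1 h2]
        have : (3:ℝ)/4*((3/4)^k*D) = (3/4)^(k+1)*D := by ring
        rw [this]
      | succ n ih =>
        have htr := dist_triangle (q k ρ) (xs (k+1+n)) (xs (k+1+n+1))
        have hs := hstepd (k+1+n)
        have hid : k+1+(n+1) = k+1+n+1 := by omega
        rw [hid]
        have hpow : (1:ℝ)/4*((3/4)^(k+1+n)*D) = (3/4)^(k+1+n)*D - (3/4)^(k+1+n+1)*D := by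
          rw [pow_succ]
          ring
        linarith
    have hcross : ∀ (k j : ℕ) (ρ σ : ℝ), k ≤ j →
        (3/4)*((3/4)^k*D) < ρ → ρ ≤ (3/4)^k*D →
        (3/4)*((3/4)^j*D) < σ → σ ≤ (3/4)^j*D → σ ≤ ρ →
        dist (q k ρ) (q j σ) = ρ - σ := by
      intro k j ρ σ hkj h1 h2 h3 h4 h5
      refine le_antisymm ?_ ?_
      · rcases eq_or_lt_of_le hkj with rfl | hkj'
        · rw [hqsame k ρ σ h1 h2 h3 h4, abs_of_nonneg (by linarith)]
        · obtain ⟨n, rfl⟩ : ∃ n, j = k+1+n := ⟨j - (k+1), by omega⟩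
          have htr := dist_triangle (q k ρ) (xs (k+1+n)) (q (k+1+n) σ)
          have hc := hchain k n ρ h1 h2
          have hx2 := hqx (k+1+n) σ h3 h4
          linarith
      · have hlow := abs_dist_sub_le (q k ρ) (q j σ) a₀
        rw [hqrad k ρ h1 h2, hqrad j σ h3 h4] at hlow
        calc ρ - σ = |ρ - σ| := (abs_of_nonneg (by linarith)).symm
        _ ≤ dist (q k ρ) (q j σ) := hlow
    have hex : ∀ θ : ℝ, θ < 1 → ∃ k : ℕ, ((3:ℝ)/4)^(k+1) < 1 - θ := by
      intro θ hθ
      obtain ⟨n, hn⟩ := exists_pow_lt_of_lt_one (show (0:ℝ) < 1 - θ by linarith)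
        (show (3:ℝ)/4 < 1 by norm_num)
      refine ⟨n, lt_of_le_of_lt ?_ hn⟩
      exact pow_le_pow_of_le_one (by norm_num) (by norm_num) (Nat.le_succ n)
    set K : ℝ → ℕ := fun θ => if h : θ < 1 then Nat.find (hex θ h) else 0 with hK
    have hKval : ∀ θ : ℝ, (h : θ < 1) → K θ = Nat.find (hex θ h) := by
      intro θ h
      simp only [hK]
      rw [dif_pos h]
    have hKs1 : ∀ θ : ℝ, (h : θ < 1) → (3/4)*((3/4)^(K θ)*D) < (1-θ)*D := by
      intro θ h
      have hsp := Nat.find_spec (hex θ h)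
      rw [← hKval θ h] at hsp
      have := mul_lt_mul_of_pos_right hsp hD0
      calc (3:ℝ)/4*((3/4)^(K θ)*D) = (3/4)^(K θ+1)*D := by ring
      _ < (1-θ)*D := this
    have hKs2 : ∀ θ : ℝ, 0 ≤ θ → (h : θ < 1) → (1-θ)*D ≤ (3/4)^(K θ)*D := by
      intro θ h0 h
      rcases Nat.eq_zero_or_pos (K θ) with hz | hp
      · rw [hz, pow_zero, one_mul]
        nlinarith
      · have hmin := Nat.find_min (hex θ h) (show K θ - 1 < Nat.find (hex θ h) by
          rw [← hKval θ h]; omega)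
        push_neg at hmin
        have hid : K θ - 1 + 1 = K θ := by omega
        rw [hid] at hmin
        exact mul_le_mul_of_nonneg_right hmin hD0.le
    have hKmono : ∀ θ θ' : ℝ, θ ≤ θ' → (h' : θ' < 1) → K θ ≤ K θ' := by
      intro θ θ' hle h'
      have hθ : θ < 1 := lt_of_le_of_lt hle h'
      rw [hKval θ hθ, hKval θ' h']
      exact Nat.find_mono fun n hn => lt_of_lt_of_le hn (by linarith)
    set γ : ℝ → X := fun θ => if θ < 1 then q (K θ) ((1-θ)*D) else a₀ with hγ
    have hγval : ∀ θ : ℝ, θ < 1 → γ θ = q (K θ) ((1-θ)*D) := by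
      intro θ h
      simp only [hγ]
      rw [if_pos h]
    have hγrad : ∀ θ : ℝ, 0 ≤ θ → (h : θ < 1) → dist (γ θ) a₀ = (1-θ)*D := by
      intro θ h0 h
      rw [hγval θ h]
      exact hqrad _ _ (hKs1 θ h) (hKs2 θ h0 h)
    have hγ0 : γ 0 = x := by
      rw [hγval 0 one_pos]
      have hK0 : K 0 = 0 := by
        rw [hKval 0 one_pos]
        rw [Nat.find_eq_zero]
        norm_num
      simp only [hq, hK0]
      have harg : 1 - (1-(0:ℝ))*D / ((3/4)^(0:ℕ)*D) = 0 := by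
        rw [pow_zero, one_mul]
        field_simp
        norm_num
      rw [harg, (hpcs 0).1, hxs0]
    have hγ1 : γ 1 = a₀ := by
      simp only [hγ]
      rw [if_neg (lt_irrefl 1)]
    have hmain : ∀ s t : ℝ, s ∈ Icc (0:ℝ) 1 → t ∈ Icc (0:ℝ) 1 → s ≤ t →
        dist (γ s) (γ t) = (t - s) * D := by
      intro s t hs ht hst
      rcases eq_or_lt_of_le ht.2 with h1 | h1
      · subst h1
        rcases eq_or_lt_of_le hst with rfl | hst'
        · simp
        · rw [hγ1, hγrad s hs.1 hst']
      · have hs1 : s < 1 := lt_of_le_of_lt hst h1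
        rw [hγval s hs1, hγval t h1]
        have := hcross (K s) (K t) ((1-s)*D) ((1-t)*D) (hKmono s t hst h1)
          (hKs1 s hs1) (hKs2 s hs.1 hs1) (hKs1 t h1) (hKs2 t ht.1 h1)
          (by nlinarith)
        rw [this]
        ring
    refine ⟨γ, hγ0, hγ1, ?_⟩
    intro s t hs ht
    rcases le_total s t with h | h
    · rw [hmain s t hs ht h, abs_of_nonpos (by linarith), neg_sub]
    · rw [dist_comm, hmain t s ht hs h, abs_of_nonneg (by linarith)]

/-- If `D_∞(X, {a₀})` is geodesic, then any two points `x, y ∈ X` with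
`d(x,y) < d(x,a₀)` or `y = a₀` can be joined by a constant-speed geodesic in `X`. -/
theorem stmt_16 {X : Type*} [MetricSpace X] (a₀ : X)
    (hgeo : ∀ f g : ℕ → X, IsDiagram {a₀} f → IsDiagram {a₀} g →
      ∃ Γ : ℝ → ℕ → X, DiagEquiv {a₀} (Γ 0) f ∧ DiagEquiv {a₀} (Γ 1) g ∧
        (∀ t ∈ Set.Icc (0:ℝ) 1, IsDiagram {a₀} (Γ t)) ∧
        ∀ s t : ℝ, s ∈ Set.Icc (0:ℝ) 1 → t ∈ Set.Icc (0:ℝ) 1 →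
          bdist {a₀} (Γ s) (Γ t) = ENNReal.ofReal |s - t| * bdist {a₀} f g) :
    ∀ x y : X, (dist x y < dist x a₀ ∨ y = a₀) →
      ∃ γ : ℝ → X, γ 0 = x ∧ γ 1 = y ∧
        ∀ s t : ℝ, s ∈ Set.Icc (0:ℝ) 1 → t ∈ Set.Icc (0:ℝ) 1 →
          dist (γ s) (γ t) = |s - t| * dist x y := by
  intro x y h
  rcases h with h | h
  · exact case1 a₀ hgeo x y h
  · rw [h]
    exact case2 a₀ hgeo x
end

section
/- Let X = c_0 be the space of real sequences converging to 0 with the supremum metric and A = {0}. Then X is a geodesic metric space, but the pseudometric space D_∞(X,A) with the bottleneck distance is not geodesic: the diagrams σ_± = {{α_F : F ∈ F_±}}, where for a finite set F ⊆ ℤ_{≥1} the sequence α_F has n-th entry 1 + 1/n for n ∈ F and 0 otherwise, and F_+ (resp. F_−) is the collection of finite subsets of even (resp. odd) cardinality, satisfy d_∞(σ_+,σ_−) = 1 but cannot be joined by a geodesic in D_∞(X,A). -/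
open scoped ENNReal
open Filter Metric Set

open scoped ZeroAtInfty

/-- For a finite set `F` of positive integers (encoded here by shifting indices so that the
paper's coordinate `n ≥ 1` is our coordinate `n - 1`), the sequence `α_F ∈ c₀` whose
`n`-th entry is `1 + 1/n` for `n ∈ F` and `0` otherwise. -/
noncomputable def alphaF (F : Finset ℕ) : C₀(ℕ, ℝ) :=
  { toFun := fun n => if n ∈ F then 1 + 1/((n:ℝ)+1) else 0
    continuous_toFun := continuous_of_discreteTopology
    zero_at_infty' := by
      have h : ∀ᶠ n in Filter.cocompact ℕ, (if n ∈ F then 1 + 1/((n:ℝ)+1) else 0) = 0 := by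
        rw [Filter.cocompact_eq_cofinite, Filter.eventually_cofinite]
        apply Set.Finite.subset F.finite_toSet
        intro n hn
        simp only [Set.mem_setOf_eq] at hn
        by_contra h
        exact hn (if_neg h)
      exact tendsto_const_nhds.congr' (h.mono fun n hn => hn.symm) }

/-- An enumeration (in fact a bijection) of all finite subsets of `ℕ` of even cardinality. -/
noncomputable def evenEnum (n : ℕ) : Finset ℕ :=
  let F := (Denumerable.ofNat (Finset ℕ) n).image (· + 1)
  if 2 ∣ F.card then F else insert 0 F

/-- An enumeration (in fact a bijection) of all finite subsets of `ℕ` of odd cardinality. -/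
noncomputable def oddEnum (n : ℕ) : Finset ℕ :=
  let F := (Denumerable.ofNat (Finset ℕ) n).image (· + 1)
  if ¬ 2 ∣ F.card then F else insert 0 F

/-- The diagram `σ₊ = {{α_F : F finite of even cardinality}}`. -/
noncomputable def sigmaPlus : ℕ → C₀(ℕ, ℝ) := fun n => alphaF (evenEnum n)

/-- The diagram `σ₋ = {{α_F : F finite of odd cardinality}}`. -/
noncomputable def sigmaMinus : ℕ → C₀(ℕ, ℝ) := fun n => alphaF (oddEnum n)

/-! ### Auxiliary lemmas -/

section Aux

open ZeroAtInftyContinuousMap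

/-- Coordinatewise bound from the sup distance on `c₀`. -/
lemma c0_abs_le_dist (f g : C₀(ℕ, ℝ)) (n : ℕ) : |f n - g n| ≤ dist f g := by
  have h := BoundedContinuousFunction.dist_coe_le_dist (f := f.toBCF) (g := g.toBCF) n
  simpa [Real.dist_eq] using h

/-- Sup distance on `c₀` from coordinatewise bounds. -/
lemma c0_dist_le {f g : C₀(ℕ, ℝ)} {C : ℝ} (hC : 0 ≤ C) (h : ∀ n, |f n - g n| ≤ C) :
    dist f g ≤ C := by
  have : dist f.toBCF g.toBCF ≤ C :=
    (BoundedContinuousFunction.dist_le hC).2 fun n => by simpa [Real.dist_eq] using h n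
  exact this

lemma alphaF_apply (F : Finset ℕ) (n : ℕ) :
    alphaF F n = if n ∈ F then 1 + 1/((n:ℝ)+1) else 0 := rfl

lemma exists_mem_notMem {F G : Finset ℕ} (h : F ≠ G) :
    ∃ k, (k ∈ F ∧ k ∉ G) ∨ (k ∈ G ∧ k ∉ F) := by
  by_contra hc
  push_neg at hc
  exact h (Finset.ext fun k => by have := hc k; tauto)

lemma abs_alphaF_sub {F G : Finset ℕ} {k : ℕ} (hk : (k ∈ F ∧ k ∉ G) ∨ (k ∈ G ∧ k ∉ F)) :
    |alphaF F k - alphaF G k| = 1 + 1/((k:ℝ)+1) := by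
  have hpos : (0:ℝ) ≤ 1 + 1/((k:ℝ)+1) := by positivity
  rcases hk with ⟨h1, h2⟩ | ⟨h1, h2⟩
  · rw [alphaF_apply, alphaF_apply, if_pos h1, if_neg h2, sub_zero, abs_of_nonneg hpos]
  · rw [alphaF_apply, alphaF_apply, if_neg h2, if_pos h1, zero_sub, abs_neg,
      abs_of_nonneg hpos]

lemma one_le_dist_alphaF {F G : Finset ℕ} (h : F ≠ G) : 1 ≤ dist (alphaF F) (alphaF G) := by
  obtain ⟨k, hk⟩ := exists_mem_notMem h
  have h1 := c0_abs_le_dist (alphaF F) (alphaF G) k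
  rw [abs_alphaF_sub hk] at h1
  have : (0:ℝ) ≤ 1/((k:ℝ)+1) := by positivity
  linarith

lemma dist_alphaF_zero_le (F : Finset ℕ) : dist (alphaF F) (0 : C₀(ℕ, ℝ)) ≤ 2 := by
  apply c0_dist_le (by norm_num)
  intro n
  have h0 : (0 : C₀(ℕ, ℝ)) n = 0 := rfl
  rw [h0, sub_zero, alphaF_apply]
  by_cases hn : n ∈ F
  · rw [if_pos hn]
    have h1 : 1/((n:ℝ)+1) ≤ 1 := by
      rw [div_le_one (by positivity)]; linarith [Nat.cast_nonneg (α := ℝ) n]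
    rw [abs_of_nonneg (by positivity)]; linarith
  · simp [hn]

lemma two_le_dist_alphaF_zero : (2:ℝ) ≤ dist (alphaF {0}) (0 : C₀(ℕ, ℝ)) := by
  have h := c0_abs_le_dist (alphaF {0}) (0 : C₀(ℕ, ℝ)) 0
  have h0 : (0 : C₀(ℕ, ℝ)) 0 = 0 := rfl
  rw [h0, sub_zero] at h
  have : alphaF ({0} : Finset ℕ) 0 = 2 := by norm_num [alphaF_apply]
  rw [this] at h
  simpa using h

end Aux
section Aux2

lemma evenEnum_def (n : ℕ) : evenEnum n =
    (if 2 ∣ ((Denumerable.ofNat (Finset ℕ) n).image (· + 1)).card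
     then (Denumerable.ofNat (Finset ℕ) n).image (· + 1)
     else insert 0 ((Denumerable.ofNat (Finset ℕ) n).image (· + 1))) := rfl

lemma oddEnum_def (n : ℕ) : oddEnum n =
    (if ¬ 2 ∣ ((Denumerable.ofNat (Finset ℕ) n).image (· + 1)).card
     then (Denumerable.ofNat (Finset ℕ) n).image (· + 1)
     else insert 0 ((Denumerable.ofNat (Finset ℕ) n).image (· + 1))) := rfl

lemma zero_not_mem_image_succ (S : Finset ℕ) : 0 ∉ S.image (· + 1) := by
  simp

lemma evenEnum_card (n : ℕ) : 2 ∣ (evenEnum n).card := by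
  rw [evenEnum_def]
  by_cases h : 2 ∣ ((Denumerable.ofNat (Finset ℕ) n).image (· + 1)).card
  · rwa [if_pos h]
  · rw [if_neg h, Finset.card_insert_of_notMem (zero_not_mem_image_succ _)]
    omega

lemma oddEnum_card (n : ℕ) : ¬ 2 ∣ (oddEnum n).card := by
  rw [oddEnum_def]
  by_cases h : 2 ∣ ((Denumerable.ofNat (Finset ℕ) n).image (· + 1)).card
  · rw [if_neg (not_not_intro h), Finset.card_insert_of_notMem (zero_not_mem_image_succ _)]
    omega
  · rwa [if_pos h]

lemma ofNat_eq_symm_eqv (n : ℕ) :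
    Denumerable.ofNat (Finset ℕ) n = (Denumerable.eqv (Finset ℕ)).symm n := rfl

lemma oddEnum_m0 : oddEnum (Denumerable.eqv (Finset ℕ) ∅) = {0} := by
  rw [oddEnum_def, ofNat_eq_symm_eqv, Equiv.symm_apply_apply]
  simp

/-- The permutation of indices realizing the toggle `S ↦ S ∆ {j}` on finite sets. -/
noncomputable def permj (j : ℕ) : ℕ ≃ ℕ :=
  ((Denumerable.eqv (Finset ℕ)).symm.trans
    (Function.Involutive.toPerm (fun S => symmDiff S {j})
      (fun S => symmDiff_symmDiff_cancel_right {j} S))).trans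
    (Denumerable.eqv (Finset ℕ))

lemma ofNat_permj (j n : ℕ) :
    Denumerable.ofNat (Finset ℕ) (permj j n) =
      symmDiff (Denumerable.ofNat (Finset ℕ) n) {j} := by
  rw [ofNat_eq_symm_eqv (permj j n)]
  simp [permj, ← ofNat_eq_symm_eqv]
  rfl

lemma symmDiff_singleton_eq (S : Finset ℕ) (j : ℕ) :
    (j ∈ S ∧ symmDiff S {j} = S.erase j) ∨ (j ∉ S ∧ symmDiff S {j} = insert j S) := by
  by_cases h : j ∈ S
  · refine Or.inl ⟨h, ?_⟩
    ext k
    simp only [Finset.mem_symmDiff, Finset.mem_erase, Finset.mem_singleton]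
    by_cases hk : k = j <;> simp [hk, h] <;> tauto
  · refine Or.inr ⟨h, ?_⟩
    ext k
    simp only [Finset.mem_symmDiff, Finset.mem_insert, Finset.mem_singleton]
    by_cases hk : k = j <;> simp [hk, h] <;> tauto

lemma card_symmDiff_singleton (S : Finset ℕ) (j : ℕ) :
    (symmDiff S {j}).card = S.card + 1 ∨ S.card = (symmDiff S {j}).card + 1 := by
  rcases symmDiff_singleton_eq S j with ⟨h, hEq⟩ | ⟨h, hEq⟩
  · right
    rw [hEq, Finset.card_erase_of_mem h]
    have := Finset.card_pos.mpr ⟨j, h⟩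
    omega
  · left
    rw [hEq, Finset.card_insert_of_notMem h]

lemma oddEnum_permj (j n : ℕ) :
    oddEnum (permj j n) = symmDiff (evenEnum n) {j+1} := by
  rw [oddEnum_def, evenEnum_def, ofNat_permj]
  have himg : (symmDiff (Denumerable.ofNat (Finset ℕ) n) {j}).image (· + 1) =
      symmDiff ((Denumerable.ofNat (Finset ℕ) n).image (· + 1)) {j+1} := by
    rw [Finset.image_symmDiff _ _ (add_left_injective 1)]
    simp
  rw [himg]
  set F := (Denumerable.ofNat (Finset ℕ) n).image (· + 1) with hF
  have h0F : 0 ∉ F := zero_not_mem_image_succ _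
  have hcard := card_symmDiff_singleton F (j+1)
  by_cases h : 2 ∣ F.card
  · rw [if_pos h]
    have h' : ¬ 2 ∣ (symmDiff F {j+1}).card := by rcases hcard with h1 | h1 <;> omega
    rw [if_pos h']
  · rw [if_neg h]
    have h' : 2 ∣ (symmDiff F {j+1}).card := by rcases hcard with h1 | h1 <;> omega
    rw [if_neg (not_not_intro h')]
    ext k
    simp only [Finset.mem_symmDiff, Finset.mem_insert, Finset.mem_singleton]
    by_cases hk0 : k = 0
    · subst hk0
      have hj0 : (0:ℕ) ≠ j + 1 := (Nat.succ_ne_zero j).symm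
      simp [h0F, hj0]
    · by_cases hkj : k = j + 1 <;> simp [hk0, hkj] <;> tauto

lemma dist_alphaF_toggle (A : Finset ℕ) (j : ℕ) :
    dist (alphaF A) (alphaF (symmDiff A {j+1})) ≤ 1 + 1/((j:ℝ)+2) := by
  apply c0_dist_le (by positivity)
  intro n
  by_cases hA : n ∈ A <;> by_cases hB : n ∈ symmDiff A {j+1}
  · -- both: n ≠ j+1? if n ∈ A and n ∈ A ∆ {j+1} then n ∉ {j+1}... entries equal? no!
    -- n ∈ A ∩ (A ∆ {j+1}): then n ∈ A \ {j+1}: entries both 1+1/(n+1): diff 0? only if n ∈ both sets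
    rw [alphaF_apply, alphaF_apply, if_pos hA, if_pos hB, sub_self, abs_zero]
    positivity
  · have hn : n = j + 1 := by
      by_contra hne
      exact hB (Finset.mem_symmDiff.mpr (Or.inl ⟨hA, by simpa using hne⟩))
    subst hn
    rw [alphaF_apply, alphaF_apply, if_pos hA, if_neg hB, sub_zero]
    rw [abs_of_nonneg (by positivity)]
    push_cast
    ring_nf
    try exact le_rfl
  · have hn : n = j + 1 := by
      rcases Finset.mem_symmDiff.mp hB with ⟨h1, _⟩ | ⟨h1, _⟩
      · exact absurd h1 hA
      · simpa using h1
    subst hn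
    rw [alphaF_apply, alphaF_apply, if_neg hA, if_pos hB, zero_sub, abs_neg]
    rw [abs_of_nonneg (by positivity)]
    push_cast
    ring_nf
    try exact le_rfl
  · rw [alphaF_apply, alphaF_apply, if_neg hA, if_neg hB, sub_self, abs_zero]
    positivity

end Aux2
section Aux3

lemma bdist_le_witness {X : Type*} [MetricSpace X] (A : Set X) (f g : ℕ → X)
    (α : ℕ → X) (hα : ∀ n, α n ∈ A) (β : ℕ → X) (hβ : ∀ n, β n ∈ A) (e : (ℕ ⊕ ℕ) ≃ (ℕ ⊕ ℕ)) :
    bdist A f g ≤ ⨆ n : ℕ ⊕ ℕ, edist (Sum.elim f α n) (Sum.elim g β (e n)) :=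
  iInf_le_of_le α (iInf_le_of_le hα (iInf_le_of_le β (iInf_le_of_le hβ (iInf_le _ e))))

lemma one_le_bdist_pm : (1 : ℝ≥0∞) ≤ bdist ({0} : Set C₀(ℕ, ℝ)) sigmaPlus sigmaMinus := by
  refine le_iInf fun α => le_iInf fun hα => le_iInf fun β => le_iInf fun hβ => le_iInf fun e => ?_
  set m₀ := Denumerable.eqv (Finset ℕ) ∅ with hm₀
  refine le_trans ?_ (le_iSup _ (e.symm (Sum.inl m₀)))
  rw [Equiv.apply_symm_apply]
  have hm : Sum.elim sigmaMinus β (Sum.inl m₀) = alphaF {0} := by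
    show sigmaMinus m₀ = alphaF {0}
    rw [show sigmaMinus m₀ = alphaF (oddEnum m₀) from rfl, oddEnum_m0]
  rw [hm]
  rcases hx : e.symm (Sum.inl m₀) with m | k
  · have : Sum.elim sigmaPlus α (Sum.inl m) = alphaF (evenEnum m) := rfl
    rw [this, edist_dist, ENNReal.one_le_ofReal]
    apply one_le_dist_alphaF
    intro hEq
    have h1 := evenEnum_card m
    rw [hEq] at h1
    simp at h1
  · have hαk : α k = 0 := hα k
    have : Sum.elim sigmaPlus α (Sum.inr k) = (0 : C₀(ℕ, ℝ)) := hαk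
    rw [this, edist_dist, ENNReal.one_le_ofReal, dist_comm]
    linarith [two_le_dist_alphaF_zero]

lemma bdist_pm_le_toggle (j : ℕ) :
    bdist ({0} : Set C₀(ℕ, ℝ)) sigmaPlus sigmaMinus ≤ ENNReal.ofReal (1 + 1/((j:ℝ)+2)) := by
  set z : ℕ → C₀(ℕ, ℝ) := fun _ => 0 with hz
  have hzA : ∀ n, z n ∈ ({0} : Set C₀(ℕ, ℝ)) := fun n => rfl
  refine le_trans
    (bdist_le_witness _ sigmaPlus sigmaMinus z hzA z hzA
      (Equiv.sumCongr (permj j) (Equiv.refl ℕ))) ?_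
  refine iSup_le ?_
  rintro (m | k)
  · have h1 : (Equiv.sumCongr (permj j) (Equiv.refl ℕ)) (Sum.inl m) = Sum.inl (permj j m) := rfl
    rw [h1]
    have h2 : Sum.elim sigmaPlus z (Sum.inl m) = alphaF (evenEnum m) := rfl
    have h3 : Sum.elim sigmaMinus z (Sum.inl (permj j m)) = alphaF (oddEnum (permj j m)) := rfl
    rw [h2, h3, edist_dist]
    apply ENNReal.ofReal_le_ofReal
    rw [oddEnum_permj]
    exact dist_alphaF_toggle _ _
  · have h1 : (Equiv.sumCongr (permj j) (Equiv.refl ℕ)) (Sum.inr k) = Sum.inr k := rfl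
    rw [h1]
    have h2 : Sum.elim sigmaPlus z (Sum.inr k) = (0 : C₀(ℕ, ℝ)) := rfl
    have h3 : Sum.elim sigmaMinus z (Sum.inr k) = (0 : C₀(ℕ, ℝ)) := rfl
    rw [h2, h3, edist_self]
    exact zero_le

lemma bdist_pm : bdist ({0} : Set C₀(ℕ, ℝ)) sigmaPlus sigmaMinus = 1 := by
  refine le_antisymm ?_ one_le_bdist_pm
  refine ENNReal.le_of_forall_pos_le_add fun ε hε _ => ?_
  have hεR : (0:ℝ) < (ε:ℝ) := hε
  obtain ⟨n, hn⟩ := exists_nat_gt (1/(ε:ℝ))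
  have hj : 1/((n:ℝ)+2) ≤ (ε:ℝ) := by
    rw [div_le_iff₀ (by positivity)]
    have h2 : 1/(ε:ℝ) ≤ (n:ℝ) + 2 := by linarith
    rw [div_le_iff₀ hεR] at h2
    linarith
  refine le_trans (bdist_pm_le_toggle n) ?_
  have : ENNReal.ofReal (1 + 1/((n:ℝ)+2)) ≤ ENNReal.ofReal (1 + (ε:ℝ)) :=
    ENNReal.ofReal_le_ofReal (by linarith)
  refine le_trans this ?_
  rw [ENNReal.ofReal_add (by norm_num) (le_of_lt hεR), ENNReal.ofReal_one,
    ENNReal.ofReal_coe_nnreal]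

lemma isDiagram_sigma (f : ℕ → C₀(ℕ, ℝ)) (hf : ∀ m, ∃ F, f m = alphaF F) :
    IsDiagram ({0} : Set C₀(ℕ, ℝ)) f := by
  set z : ℕ → C₀(ℕ, ℝ) := fun _ => 0 with hz
  have hzA : ∀ n, z n ∈ ({0} : Set C₀(ℕ, ℝ)) := fun n => rfl
  refine ⟨z, hzA, ?_⟩
  have hb : bdist ({0} : Set C₀(ℕ, ℝ)) f z ≤ ENNReal.ofReal 2 := by
    refine le_trans (bdist_le_witness _ f z z hzA z hzA (Equiv.refl _)) ?_
    refine iSup_le ?_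
    rintro (m | k)
    · have h2 : Sum.elim f z (Sum.inl m) = f m := rfl
      have h3 : Sum.elim z z ((Equiv.refl _) (Sum.inl m)) = (0 : C₀(ℕ, ℝ)) := rfl
      rw [h2, h3, edist_dist]
      obtain ⟨F, hF⟩ := hf m
      rw [hF]
      exact ENNReal.ofReal_le_ofReal (dist_alphaF_zero_le F)
    · have h2 : Sum.elim f z (Sum.inr k) = (0 : C₀(ℕ, ℝ)) := rfl
      have h3 : Sum.elim z z ((Equiv.refl _) (Sum.inr k)) = (0 : C₀(ℕ, ℝ)) := rfl
      rw [h2, h3, edist_self]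
      exact zero_le
  exact ne_top_of_le_ne_top ENNReal.ofReal_ne_top hb

end Aux3
section Transport

variable {X : Type*} [MetricSpace X] {pt : X}

/-- Indices of points outside `A` in the decorated multiset equal those of the original. -/
def outEquiv (f α : ℕ → X) (hα : ∀ n, α n ∈ ({pt} : Set X)) :
    {x : ℕ ⊕ ℕ // Sum.elim f α x ∉ ({pt} : Set X)} ≃ {n : ℕ // f n ∉ ({pt} : Set X)} where
  toFun x := match x with
    | ⟨Sum.inl n, h⟩ => ⟨n, h⟩
    | ⟨Sum.inr n, h⟩ => absurd (hα n) h
  invFun n := ⟨Sum.inl n.1, n.2⟩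
  left_inv := by
    rintro ⟨n | n, h⟩
    · rfl
    · exact absurd (hα n) h
  right_inv n := rfl

lemma DiagEquiv.symm' {A : Set X} {f g : ℕ → X} (h : DiagEquiv A f g) : DiagEquiv A g f := by
  obtain ⟨e, he⟩ := h
  refine ⟨e.symm, fun p => ?_⟩
  have h1 := he (e.symm p)
  rw [Equiv.apply_symm_apply] at h1
  exact h1.symm

lemma bdist_le_of_diagEquiv {f g : ℕ → X} (hfg : DiagEquiv ({pt} : Set X) f g) (h : ℕ → X) :
    bdist ({pt} : Set X) g h ≤ bdist ({pt} : Set X) f h := by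
  classical
  refine le_iInf fun α => le_iInf fun hα => le_iInf fun β => le_iInf fun hβ => le_iInf fun E => ?_
  obtain ⟨e, he⟩ := hfg
  set α' : ℕ → X := fun _ => pt with hα'def
  have hα' : ∀ n, α' n ∈ ({pt} : Set X) := fun n => rfl
  set p : ℕ ⊕ ℕ → Prop := fun x => Sum.elim f α x ∉ ({pt} : Set X) with hp
  set q : ℕ ⊕ ℕ → Prop := fun x => Sum.elim g α' x ∉ ({pt} : Set X) with hq
  haveI : Infinite {x : ℕ ⊕ ℕ // ¬ p x} :=
    Infinite.of_injective
      (fun n : ℕ => (⟨Sum.inr n, not_not_intro (hα n)⟩ : {x : ℕ ⊕ ℕ // ¬ p x}))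
      (fun a b hab => by
        have := congrArg Subtype.val hab
        simpa using this)
  haveI : Infinite {x : ℕ ⊕ ℕ // ¬ q x} :=
    Infinite.of_injective
      (fun n : ℕ => (⟨Sum.inr n, not_not_intro (hα' n)⟩ : {x : ℕ ⊕ ℕ // ¬ q x}))
      (fun a b hab => by
        have := congrArg Subtype.val hab
        simpa using this)
  obtain ⟨D1⟩ := nonempty_denumerable {x : ℕ ⊕ ℕ // ¬ p x}
  obtain ⟨D2⟩ := nonempty_denumerable {x : ℕ ⊕ ℕ // ¬ q x}
  let eOut : {x : ℕ ⊕ ℕ // p x} ≃ {x : ℕ ⊕ ℕ // q x} :=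
    (outEquiv f α hα).trans (e.trans (outEquiv g α' hα').symm)
  let eIn : {x : ℕ ⊕ ℕ // ¬ p x} ≃ {x : ℕ ⊕ ℕ // ¬ q x} :=
    (@Denumerable.eqv _ D1).trans (@Denumerable.eqv _ D2).symm
  let Φ : (ℕ ⊕ ℕ) ≃ (ℕ ⊕ ℕ) :=
    ((Equiv.sumCompl q).symm.trans
      ((Equiv.sumCongr eOut.symm eIn.symm).trans (Equiv.sumCompl p)))
  have eOut_val : ∀ s : {x : ℕ ⊕ ℕ // p x}, Sum.elim g α' ((eOut s).1) = Sum.elim f α s.1 := by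
    rintro ⟨n | n, hs⟩
    · exact he ⟨n, hs⟩
    · exact absurd (hα n) hs
  have key : ∀ x, Sum.elim f α (Φ x) = Sum.elim g α' x := by
    intro x
    by_cases hx : q x
    · have h1 : Φ x = ((eOut.symm ⟨x, hx⟩ : {x : ℕ ⊕ ℕ // p x}) : ℕ ⊕ ℕ) := by
        show ((Equiv.sumCompl p) ((Equiv.sumCongr eOut.symm eIn.symm)
          ((Equiv.sumCompl q).symm x))) = _
        rw [Equiv.sumCompl_symm_apply_of_pos hx]
        rfl
      rw [h1]
      have h2 := eOut_val (eOut.symm ⟨x, hx⟩)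
      rw [Equiv.apply_symm_apply] at h2
      exact h2.symm
    · have h1 : Φ x = ((eIn.symm ⟨x, hx⟩ : {x : ℕ ⊕ ℕ // ¬ p x}) : ℕ ⊕ ℕ) := by
        show ((Equiv.sumCompl p) ((Equiv.sumCongr eOut.symm eIn.symm)
          ((Equiv.sumCompl q).symm x))) = _
        rw [Equiv.sumCompl_symm_apply_of_neg hx]
        rfl
      rw [h1]
      have h2 : Sum.elim f α ((eIn.symm ⟨x, hx⟩ : {x : ℕ ⊕ ℕ // ¬ p x}) : ℕ ⊕ ℕ) ∈
          ({pt} : Set X) := not_not.mp (eIn.symm ⟨x, hx⟩).2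
      have h3 : Sum.elim g α' x ∈ ({pt} : Set X) := not_not.mp hx
      rw [Set.mem_singleton_iff.mp h2, Set.mem_singleton_iff.mp h3]
  refine le_trans (bdist_le_witness _ g h α' hα' β hβ (Φ.trans E)) ?_
  have hcong : ∀ x, edist (Sum.elim g α' x) (Sum.elim h β ((Φ.trans E) x)) =
      edist (Sum.elim f α (Φ x)) (Sum.elim h β (E (Φ x))) := fun x => by
    rw [key x]
    rfl
  calc ⨆ x, edist (Sum.elim g α' x) (Sum.elim h β ((Φ.trans E) x))
      = ⨆ x, edist (Sum.elim f α (Φ x)) (Sum.elim h β (E (Φ x))) := iSup_congr hcong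
    _ = ⨆ y, edist (Sum.elim f α y) (Sum.elim h β (E y)) :=
        Φ.iSup_comp (g := fun y => edist (Sum.elim f α y) (Sum.elim h β (E y)))
    _ ≤ ⨆ n : ℕ ⊕ ℕ, edist (Sum.elim f α n) (Sum.elim h β (E n)) := le_rfl

lemma bdist_congr {f g : ℕ → X} (hfg : DiagEquiv ({pt} : Set X) f g) (h : ℕ → X) :
    bdist ({pt} : Set X) f h = bdist ({pt} : Set X) g h :=
  le_antisymm (bdist_le_of_diagEquiv hfg.symm' h) (bdist_le_of_diagEquiv hfg h)

end Transport
section NoMidpoint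

lemma exists_partner {f μ : ℕ → C₀(ℕ, ℝ)}
    (hb : bdist ({0} : Set C₀(ℕ, ℝ)) f μ ≤ ENNReal.ofReal (1/2))
    {ε : ℝ} (hε : 0 < ε) (hε' : ε < 3/4) {n₀ : ℕ} (hn : 5/4 ≤ dist (μ n₀) (0 : C₀(ℕ, ℝ))) :
    ∃ m, dist (f m) (μ n₀) ≤ 1/2 + ε := by
  have hlt : bdist ({0} : Set C₀(ℕ, ℝ)) f μ < ENNReal.ofReal (1/2 + ε) :=
    lt_of_le_of_lt hb (by rw [ENNReal.ofReal_lt_ofReal_iff (by linarith)]; linarith)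
  unfold bdist at hlt
  rw [iInf_lt_iff] at hlt; obtain ⟨α, hlt⟩ := hlt
  rw [iInf_lt_iff] at hlt; obtain ⟨hα, hlt⟩ := hlt
  rw [iInf_lt_iff] at hlt; obtain ⟨β, hlt⟩ := hlt
  rw [iInf_lt_iff] at hlt; obtain ⟨hβ, hlt⟩ := hlt
  rw [iInf_lt_iff] at hlt; obtain ⟨e, hlt⟩ := hlt
  have hsup := lt_of_le_of_lt (le_iSup _ (e.symm (Sum.inl n₀))) hlt
  rw [Equiv.apply_symm_apply] at hsup
  rcases hx : e.symm (Sum.inl n₀) with m | k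
  · rw [hx] at hsup
    have : Sum.elim f α (Sum.inl m) = f m := rfl
    rw [this] at hsup
    have h1 : Sum.elim μ β (Sum.inl n₀) = μ n₀ := rfl
    rw [h1] at hsup
    exact ⟨m, le_of_lt (edist_lt_ofReal.mp hsup)⟩
  · rw [hx] at hsup
    have hαk : α k = 0 := Set.mem_singleton_iff.mp (hα k)
    have h2 : Sum.elim f α (Sum.inr k) = (0 : C₀(ℕ, ℝ)) := hαk
    have h1 : Sum.elim μ β (Sum.inl n₀) = μ n₀ := rfl
    rw [h2, h1] at hsup
    have h3 := edist_lt_ofReal.mp hsup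
    rw [dist_comm] at h3
    linarith

lemma exists_big_point {μ : ℕ → C₀(ℕ, ℝ)}
    (hb : bdist ({0} : Set C₀(ℕ, ℝ)) sigmaMinus μ ≤ ENNReal.ofReal (1/2)) :
    ∃ n₀, 5/4 ≤ dist (μ n₀) (0 : C₀(ℕ, ℝ)) ∧ dist (alphaF {0}) (μ n₀) ≤ 3/4 := by
  have hlt : bdist ({0} : Set C₀(ℕ, ℝ)) sigmaMinus μ < ENNReal.ofReal (3/4) :=
    lt_of_le_of_lt hb (by rw [ENNReal.ofReal_lt_ofReal_iff (by norm_num)]; norm_num)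
  unfold bdist at hlt
  rw [iInf_lt_iff] at hlt; obtain ⟨α, hlt⟩ := hlt
  rw [iInf_lt_iff] at hlt; obtain ⟨hα, hlt⟩ := hlt
  rw [iInf_lt_iff] at hlt; obtain ⟨β, hlt⟩ := hlt
  rw [iInf_lt_iff] at hlt; obtain ⟨hβ, hlt⟩ := hlt
  rw [iInf_lt_iff] at hlt; obtain ⟨e, hlt⟩ := hlt
  set m₀ := Denumerable.eqv (Finset ℕ) ∅ with hm₀
  have hsup := lt_of_le_of_lt (le_iSup _ (Sum.inl m₀)) hlt
  have hσ : Sum.elim sigmaMinus α (Sum.inl m₀) = alphaF {0} := by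
    show sigmaMinus m₀ = alphaF {0}
    rw [show sigmaMinus m₀ = alphaF (oddEnum m₀) from rfl, oddEnum_m0]
  rw [hσ] at hsup
  rcases hx : e (Sum.inl m₀) with n₀ | k
  · rw [hx] at hsup
    have h1 : Sum.elim μ β (Sum.inl n₀) = μ n₀ := rfl
    rw [h1] at hsup
    have h2 := le_of_lt (edist_lt_ofReal.mp hsup)
    refine ⟨n₀, ?_, h2⟩
    have h3 := dist_triangle (alphaF {0}) (μ n₀) (0 : C₀(ℕ, ℝ))
    linarith [two_le_dist_alphaF_zero]
  · rw [hx] at hsup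
    have hβk : β k = 0 := Set.mem_singleton_iff.mp (hβ k)
    have h2 : Sum.elim μ β (Sum.inr k) = (0 : C₀(ℕ, ℝ)) := hβk
    rw [h2] at hsup
    have h3 := edist_lt_ofReal.mp hsup
    linarith [two_le_dist_alphaF_zero]

lemma no_midpoint_point (v : C₀(ℕ, ℝ))
    (h : ∀ ε : ℝ, 0 < ε → ε < 3/4 →
      (∃ F, 2 ∣ F.card ∧ dist (alphaF F) v ≤ 1/2 + ε) ∧
      (∃ G, ¬ 2 ∣ G.card ∧ dist (alphaF G) v ≤ 1/2 + ε)) : False := by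
  have hv : Filter.Tendsto (fun k => v k) Filter.atTop (nhds 0) := by
    have h1 := zero_at_infty v
    rwa [Filter.cocompact_eq_cofinite, Nat.cofinite_eq_atTop] at h1
  obtain ⟨K, hK⟩ := (Metric.tendsto_atTop.mp hv) (1/4) (by norm_num)
  set ε := min (1/8 : ℝ) (1/(2*((K:ℝ)+1))) with hεdef
  have hεpos : 0 < ε := lt_min (by norm_num) (by positivity)
  have hε8 : ε ≤ 1/8 := min_le_left _ _
  obtain ⟨⟨F, hF, hFd⟩, ⟨G, hG, hGd⟩⟩ := h ε hεpos (by linarith)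
  have hne : F ≠ G := fun hEq => hG (hEq ▸ hF)
  obtain ⟨k, hk⟩ := exists_mem_notMem hne
  have hdFG : dist (alphaF F) (alphaF G) ≤ 1 + 2*ε := by
    have h1 := dist_triangle (alphaF F) v (alphaF G)
    have h2 : dist v (alphaF G) = dist (alphaF G) v := dist_comm _ _
    linarith
  have hkey : 1 + 1/((k:ℝ)+1) ≤ 1 + 2*ε := by
    have h1 := c0_abs_le_dist (alphaF F) (alphaF G) k
    rw [abs_alphaF_sub hk] at h1
    linarith
  have hfrac : 1/((k:ℝ)+1) ≤ 2*ε := by linarith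
  have hkK : K ≤ k := by
    by_contra hlt
    push_neg at hlt
    have h1 : ε ≤ 1/(2*((K:ℝ)+1)) := min_le_right _ _
    have h1' : 2 * (1/(2*((K:ℝ)+1))) = 1/((K:ℝ)+1) := by field_simp
    have h2 : 1/((k:ℝ)+1) ≤ 1/((K:ℝ)+1) := by linarith
    have hkc : ((k:ℝ)) + 1 ≤ (K:ℝ) := by
      have := (Nat.cast_le (α := ℝ)).mpr (Nat.succ_le_of_lt hlt)
      push_cast at this
      linarith
    have h3 : 1/((K:ℝ)+1) < 1/((k:ℝ)+1) := by
      apply one_div_lt_one_div_of_lt (by positivity)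
      linarith
    linarith
  have hvk : |v k| < 1/4 := by
    have := hK k hkK
    rwa [Real.dist_eq, sub_zero] at this
  have hcoord : 3/8 ≤ v k := by
    have h1k : (0:ℝ) ≤ 1/((k:ℝ)+1) := by positivity
    rcases hk with ⟨h1, _⟩ | ⟨h1, _⟩
    · have hd := le_trans (c0_abs_le_dist (alphaF F) v k) hFd
      have hαk : alphaF F k = 1 + 1/((k:ℝ)+1) := by rw [alphaF_apply, if_pos h1]
      have h2 := (abs_le.mp hd).2
      rw [hαk] at h2
      linarith
    · have hd := le_trans (c0_abs_le_dist (alphaF G) v k) hGd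
      have hαk : alphaF G k = 1 + 1/((k:ℝ)+1) := by rw [alphaF_apply, if_pos h1]
      have h2 := (abs_le.mp hd).2
      rw [hαk] at h2
      linarith
  have := abs_lt.mp hvk
  linarith [this.2]

end NoMidpoint

/-- `c₀` (with the sup metric) is geodesic, the diagrams `σ₊, σ₋ ∈ D_∞(c₀, {0})` are at
bottleneck distance `1`, yet they cannot be joined by a geodesic in `D_∞(c₀, {0})`:
the space `D_∞(c₀, {0})` is not geodesic. -/
theorem stmt_19 :
    (∀ x y : C₀(ℕ, ℝ), ∃ γ : ℝ → C₀(ℕ, ℝ), γ 0 = x ∧ γ 1 = y ∧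
      ∀ s t : ℝ, s ∈ Set.Icc (0:ℝ) 1 → t ∈ Set.Icc (0:ℝ) 1 →
        dist (γ s) (γ t) = |s - t| * dist x y) ∧
    IsDiagram ({0} : Set C₀(ℕ, ℝ)) sigmaPlus ∧
    IsDiagram ({0} : Set C₀(ℕ, ℝ)) sigmaMinus ∧
    bdist ({0} : Set C₀(ℕ, ℝ)) sigmaPlus sigmaMinus = 1 ∧
    ¬ ∃ Γ : ℝ → ℕ → C₀(ℕ, ℝ),
        DiagEquiv ({0} : Set C₀(ℕ, ℝ)) (Γ 0) sigmaPlus ∧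
        DiagEquiv ({0} : Set C₀(ℕ, ℝ)) (Γ 1) sigmaMinus ∧
        (∀ t ∈ Set.Icc (0:ℝ) 1, IsDiagram ({0} : Set C₀(ℕ, ℝ)) (Γ t)) ∧
        ∀ s t : ℝ, s ∈ Set.Icc (0:ℝ) 1 → t ∈ Set.Icc (0:ℝ) 1 →
          bdist ({0} : Set C₀(ℕ, ℝ)) (Γ s) (Γ t) =
            ENNReal.ofReal |s - t| * bdist ({0} : Set C₀(ℕ, ℝ)) sigmaPlus sigmaMinus := by
  refine ⟨?_, ?_, ?_, bdist_pm, ?_⟩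
  · -- `c₀` is geodesic: straight-line segments
    intro x y
    refine ⟨fun t => x + t • (y - x), by simp, ?_, ?_⟩
    · show x + (1:ℝ) • (y - x) = y
      rw [one_smul]
      abel
    · intro s t _ _
      have hst : (x + s • (y - x)) - (x + t • (y - x)) = (s - t) • (y - x) := by
        module
      rw [dist_eq_norm, hst, show dist x y = ‖y - x‖ by rw [dist_eq_norm, norm_sub_rev],
        show |s - t| = ‖s - t‖ from rfl]
      exact norm_smul (s - t) (y - x)
  · exact isDiagram_sigma sigmaPlus (fun m => ⟨evenEnum m, rfl⟩)
  · exact isDiagram_sigma sigmaMinus (fun m => ⟨oddEnum m, rfl⟩)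
  · rintro ⟨Γ, hd0, hd1, _, hgeo⟩
    have h0m : (0:ℝ) ∈ Set.Icc (0:ℝ) 1 := by norm_num
    have h1m : (1:ℝ) ∈ Set.Icc (0:ℝ) 1 := by norm_num
    have hhm : (1/2:ℝ) ∈ Set.Icc (0:ℝ) 1 := by norm_num
    have e1 : bdist ({0} : Set C₀(ℕ, ℝ)) sigmaPlus (Γ (1/2)) ≤ ENNReal.ofReal (1/2) := by
      rw [← bdist_congr hd0 (Γ (1/2)), hgeo 0 (1/2) h0m hhm, bdist_pm, mul_one]
      apply le_of_eq
      congr 1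
      rw [abs_sub_comm, sub_zero, abs_of_pos (by norm_num : (0:ℝ) < 1/2)]
    have e2 : bdist ({0} : Set C₀(ℕ, ℝ)) sigmaMinus (Γ (1/2)) ≤ ENNReal.ofReal (1/2) := by
      rw [← bdist_congr hd1 (Γ (1/2)), hgeo 1 (1/2) h1m hhm, bdist_pm, mul_one]
      apply le_of_eq
      congr 1
      rw [show (1:ℝ) - 1/2 = 1/2 by norm_num, abs_of_pos (by norm_num : (0:ℝ) < 1/2)]
    obtain ⟨n₀, hn₀, -⟩ := exists_big_point e2
    apply no_midpoint_point (Γ (1/2) n₀)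
    intro ε hε hε'
    constructor
    · obtain ⟨m, hm⟩ := exists_partner e1 hε hε' hn₀
      exact ⟨evenEnum m, evenEnum_card m, hm⟩
    · obtain ⟨m, hm⟩ := exists_partner e2 hε hε' hn₀
      exact ⟨oddEnum m, oddEnum_card m, hm⟩
end
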